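/- arXiv:1812.09016 — 5 statements merged into one kernel-verified Lean document; each statement's English description precedes it below -/
import Mathlib

section
/- Let ξ₁,…,ξ_m be independent real random variables, and suppose there exist η > 0 and τ ∈ (0,1) such that P(|ξ_k| ≤ η) ≤ τ for all k ≤ m. Then for every ε ∈ (0,1], P(‖(ξ₁,…,ξ_m)‖₂ ≤ η·√(ε·m)) ≤ (e/ε)^{ε m} · τ^{m - ε m}. -/
open MeasureTheory ProbabilityTheory

lemma auxA (k : ℕ) : (k:ℝ)^k ≤ k.factorial * Real.exp k := by
  have h : (k:ℝ)^k / k.factorial ≤ Real.exp k := by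
    calc (k:ℝ)^k / k.factorial
        ≤ ∑ i ∈ Finset.range (k+1), (k:ℝ)^i / i.factorial := by
          refine Finset.single_le_sum (f := fun i => (k:ℝ)^i / i.factorial) ?_ ?_
          · intro i _; positivity
          · simp
      _ ≤ Real.exp k := Real.sum_le_exp_of_nonneg (by positivity) _
  have hfac : (0:ℝ) < k.factorial := by exact_mod_cast k.factorial_pos
  calc (k:ℝ)^k = (k:ℝ)^k / k.factorial * k.factorial := by field_simp
    _ ≤ Real.exp k * k.factorial := by
        exact mul_le_mul_of_nonneg_right h hfac.le
    _ = k.factorial * Real.exp k := by ring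

lemma auxB {M a b : ℝ} (ha : 1 ≤ a) (hab : a ≤ b) (hbM : b ≤ M) :
    (Real.exp 1 * M / a) ^ a ≤ (Real.exp 1 * M / b) ^ b := by
  have ha0 : 0 < a := lt_of_lt_of_le one_pos ha
  have hb0 : 0 < b := lt_of_lt_of_le ha0 hab
  have hM0 : 0 < M := lt_of_lt_of_le hb0 hbM
  have hbase1 : 0 < Real.exp 1 * M / a := by positivity
  have hbase2 : 0 < Real.exp 1 * M / b := by positivity
  rw [Real.rpow_def_of_pos hbase1, Real.rpow_def_of_pos hbase2, Real.exp_le_exp]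
  have hlog1 : Real.log (Real.exp 1 * M / a) = 1 + Real.log M - Real.log a := by
    rw [Real.log_div (by positivity) (by positivity), Real.log_mul (by positivity) (by positivity),
      Real.log_exp]
  have hlog2 : Real.log (Real.exp 1 * M / b) = 1 + Real.log M - Real.log b := by
    rw [Real.log_div (by positivity) (by positivity), Real.log_mul (by positivity) (by positivity),
      Real.log_exp]
  rw [hlog1, hlog2]
  have h1 : Real.log b - Real.log a ≤ (b - a) / a := by
    rw [← Real.log_div hb0.ne' ha0.ne']
    have := Real.log_le_sub_one_of_pos (show (0:ℝ) < b / a by positivity)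
    calc Real.log (b/a) ≤ b/a - 1 := this
      _ = (b - a)/a := by field_simp
  have h2 : Real.log b ≤ Real.log M := Real.log_le_log hb0 hbM
  have h1' : (Real.log b - Real.log a) * a ≤ b - a := (le_div_iff₀ ha0).mp h1
  nlinarith [mul_nonneg (sub_nonneg.2 hab) (sub_nonneg.2 h2)]

lemma auxC {m k : ℕ} {ε : ℝ} (hε0 : 0 < ε) (hε1 : ε ≤ 1) (hk : (k:ℝ) ≤ ε * m)
    (hεm : ε * m ≤ m) :
    (m.choose k : ℝ) ≤ (Real.exp 1 / ε) ^ (ε * m) := by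
  have hεm0 : 0 ≤ ε * m := le_trans (Nat.cast_nonneg k) hk
  rcases Nat.eq_zero_or_pos k with hk0 | hk1
  · subst hk0
    simp only [Nat.choose_zero_right, Nat.cast_one]
    refine Real.one_le_rpow ?_ hεm0
    rw [le_div_iff₀ hε0]
    nlinarith [Real.add_one_le_exp (1:ℝ)]
  · have hk1' : (1:ℝ) ≤ k := by exact_mod_cast hk1
    have hkpos : (0:ℝ) < k := lt_of_lt_of_le one_pos hk1'
    have hm0 : (0:ℝ) < m := lt_of_lt_of_le hkpos (le_trans hk hεm)
    have hfac : (0:ℝ) < k.factorial := by exact_mod_cast k.factorial_pos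
    have step1 : (m.choose k : ℝ) ≤ (m:ℝ)^k / k.factorial := Nat.choose_le_pow_div k m
    have step2 : (m:ℝ)^k / k.factorial ≤ (Real.exp 1 * m / k)^(k:ℕ) := by
      have hA := auxA k
      have hexp : (Real.exp 1)^(k:ℕ) = Real.exp (k:ℕ) := by
        rw [← Real.exp_nat_mul, mul_one]
      rw [div_pow, mul_pow, hexp, div_le_div_iff₀ hfac (by positivity)]
      calc (m:ℝ)^k * (k:ℝ)^k ≤ (m:ℝ)^k * ((k.factorial : ℝ) * Real.exp (k:ℕ)) :=
            mul_le_mul_of_nonneg_left hA (by positivity)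
        _ = Real.exp (k:ℕ) * (m:ℝ)^k * (k.factorial : ℝ) := by ring
    have step3 : ((Real.exp 1 * m / k):ℝ)^(k:ℕ) = (Real.exp 1 * m / k) ^ ((k:ℕ):ℝ) :=
      (Real.rpow_natCast _ k).symm
    have step4 : (Real.exp 1 * m / (k:ℝ)) ^ ((k:ℕ):ℝ) ≤ (Real.exp 1 * m / (ε*m)) ^ (ε*m) :=
      auxB hk1' hk hεm
    have step5 : Real.exp 1 * m / (ε * m) = Real.exp 1 / ε := by
      field_simp
    calc (m.choose k : ℝ) ≤ (m:ℝ)^k / k.factorial := step1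
      _ ≤ (Real.exp 1 * m / k)^(k:ℕ) := step2
      _ = (Real.exp 1 * m / k) ^ ((k:ℕ):ℝ) := step3
      _ ≤ (Real.exp 1 * m / (ε*m)) ^ (ε*m) := step4
      _ = (Real.exp 1 / ε) ^ (ε*m) := by rw [step5]

lemma auxD {m k : ℕ} {ε τ : ℝ} (hτ0 : 0 < τ) (hτ1 : τ < 1) (hk : (k:ℝ) ≤ ε * m)
    (hεm : ε * m ≤ m) (hkm : k ≤ m) :
    τ ^ (m - k : ℕ) ≤ τ ^ ((m:ℝ) - ε * m) := by
  have : τ ^ (m - k : ℕ) = τ ^ (((m - k : ℕ)):ℝ) := (Real.rpow_natCast _ _).symm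
  rw [this, Nat.cast_sub hkm]
  exact Real.rpow_le_rpow_of_exponent_ge hτ0 hτ1.le (by linarith)

/-- Tensorization: if each `|ξ_k|` is small with probability at most `τ`, then
the Euclidean norm of `(ξ₁,…,ξ_m)` is at most `η√(εm)` with probability at most
`(e/ε)^{εm} · τ^{m-εm}`. -/
theorem stmt_2 {Ω : Type*} [MeasurableSpace Ω] (P : Measure Ω)
    [IsProbabilityMeasure P] (m : ℕ) (ξ : Fin m → Ω → ℝ)
    (hmeas : ∀ k, Measurable (ξ k))
    (hindep : iIndepFun ξ P)
    (η τ : ℝ) (hη : 0 < η) (hτ : τ ∈ Set.Ioo (0:ℝ) 1)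
    (hsmall : ∀ k, P {ω | |ξ k ω| ≤ η} ≤ ENNReal.ofReal τ) :
    ∀ ε : ℝ, ε ∈ Set.Ioc (0:ℝ) 1 →
      P {ω | Real.sqrt (∑ i, (ξ i ω) ^ 2) ≤ η * Real.sqrt (ε * m)}
        ≤ ENNReal.ofReal ((Real.exp 1 / ε) ^ (ε * m) * τ ^ ((m : ℝ) - ε * m)) := by
  intro ε hε
  obtain ⟨hε0, hε1⟩ := hε
  obtain ⟨hτ0, hτ1⟩ := hτ
  set k := ⌊ε * (m:ℝ)⌋₊ with hkdef
  have hεm0 : 0 ≤ ε * m := by positivity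
  have hkle : (k:ℝ) ≤ ε * m := Nat.floor_le hεm0
  have hεm_le : ε * m ≤ m := by nlinarith [Nat.cast_nonneg (α := ℝ) m]
  have hkm : k ≤ m := by
    have : (k:ℝ) ≤ (m:ℝ) := le_trans hkle hεm_le
    exact_mod_cast this
  set A : Fin m → Set Ω := fun i => {ω | |ξ i ω| ≤ η} with hAdef
  -- inclusion into union
  have hsub : {ω | Real.sqrt (∑ i, (ξ i ω) ^ 2) ≤ η * Real.sqrt (ε * m)} ⊆
      ⋃ T ∈ Finset.univ.powersetCard (m - k), ⋂ i ∈ T, A i := by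
    intro ω hω
    simp only [Set.mem_setOf_eq] at hω
    have hsumnn : 0 ≤ ∑ i, (ξ i ω) ^ 2 := Finset.sum_nonneg fun i _ => sq_nonneg _
    have hsum : ∑ i, (ξ i ω) ^ 2 ≤ η^2 * (ε * m) := by
      have h2 : Real.sqrt (∑ i, (ξ i ω) ^ 2) ^ 2 ≤ (η * Real.sqrt (ε * m))^2 := by
        have hnn : 0 ≤ Real.sqrt (∑ i, (ξ i ω) ^ 2) := Real.sqrt_nonneg _
        nlinarith
      rwa [Real.sq_sqrt hsumnn, mul_pow, Real.sq_sqrt hεm0] at h2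
    set S := Finset.univ.filter (fun i => η < |ξ i ω|) with hSdef
    have hScard : (S.card : ℝ) ≤ ε * m := by
      have h1 : (S.card : ℝ) * η^2 ≤ ∑ i, (ξ i ω) ^ 2 := by
        calc (S.card : ℝ) * η^2 = ∑ _i ∈ S, η^2 := by rw [Finset.sum_const, nsmul_eq_mul]
          _ ≤ ∑ i ∈ S, (ξ i ω)^2 := by
              refine Finset.sum_le_sum fun i hi => ?_
              have : η < |ξ i ω| := by
                simpa [hSdef] using (Finset.mem_filter.mp hi).2
              nlinarith [abs_nonneg (ξ i ω), sq_abs (ξ i ω)]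
          _ ≤ ∑ i, (ξ i ω)^2 := by
              refine Finset.sum_le_sum_of_subset_of_nonneg (Finset.subset_univ _) ?_
              intro i _ _; exact sq_nonneg _
      nlinarith [pow_pos hη 2]
    have hSk : S.card ≤ k := Nat.le_floor hScard
    have hcompl : m - k ≤ Sᶜ.card := by
      have h := Finset.card_compl S
      rw [Fintype.card_fin] at h
      omega
    obtain ⟨T, hTsub, hTcard⟩ := Finset.exists_subset_card_eq hcompl
    refine Set.mem_iUnion₂.2 ⟨T, ?_, ?_⟩
    · simp [Finset.mem_powersetCard, hTcard]
    · refine Set.mem_iInter₂.2 fun i hi => ?_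
      have hic : i ∈ Sᶜ := hTsub hi
      have : ¬ η < |ξ i ω| := by
        simpa [hSdef] using (Finset.mem_compl.mp hic)
      exact le_of_not_gt this
  -- measure computation
  have hApre : ∀ i, A i = ξ i ⁻¹' (Set.Icc (-η) η) := by
    intro i; ext ω; simp [hAdef, abs_le]
  have hmain : P {ω | Real.sqrt (∑ i, (ξ i ω) ^ 2) ≤ η * Real.sqrt (ε * m)}
      ≤ (m.choose (m - k) : ENNReal) * ENNReal.ofReal τ ^ (m - k) := by
    calc P {ω | Real.sqrt (∑ i, (ξ i ω) ^ 2) ≤ η * Real.sqrt (ε * m)}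
        ≤ P (⋃ T ∈ Finset.univ.powersetCard (m - k), ⋂ i ∈ T, A i) := measure_mono hsub
      _ ≤ ∑ T ∈ Finset.univ.powersetCard (m - k), P (⋂ i ∈ T, A i) :=
          measure_biUnion_finset_le _ _
      _ ≤ ∑ _T ∈ Finset.univ.powersetCard (m - k), ENNReal.ofReal τ ^ (m - k) := by
          refine Finset.sum_le_sum fun T hT => ?_
          have hTcard : T.card = m - k := (Finset.mem_powersetCard.mp hT).2
          have hmeasA : ∀ i, i ∈ T →
              MeasurableSet[(inferInstance : MeasurableSpace ℝ).comap (ξ i)] (A i) := by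
            intro i _
            exact ⟨Set.Icc (-η) η, measurableSet_Icc, (hApre i).symm⟩
          rw [hindep.meas_biInter hmeasA]
          calc ∏ i ∈ T, P (A i) ≤ ∏ _i ∈ T, ENNReal.ofReal τ :=
                Finset.prod_le_prod' fun i _ => hsmall i
            _ = ENNReal.ofReal τ ^ (m - k) := by rw [Finset.prod_const, hTcard]
      _ = (m.choose (m - k) : ENNReal) * ENNReal.ofReal τ ^ (m - k) := by
          rw [Finset.sum_const, Finset.card_powersetCard, Finset.card_univ, Fintype.card_fin,
            nsmul_eq_mul]
  refine le_trans hmain ?_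
  have hrw : (m.choose (m - k) : ENNReal) * ENNReal.ofReal τ ^ (m - k)
      = ENNReal.ofReal ((m.choose (m - k) : ℝ) * τ ^ (m - k : ℕ)) := by
    rw [ENNReal.ofReal_mul (by positivity), ← ENNReal.ofReal_pow hτ0.le,
      ENNReal.ofReal_natCast]
  rw [hrw]
  refine ENNReal.ofReal_le_ofReal ?_
  have hchoose : (m.choose (m - k) : ℝ) = (m.choose k : ℝ) := by
    rw [Nat.choose_symm hkm]
  rw [hchoose]
  exact mul_le_mul (auxC hε0 hε1 hkle hεm_le) (auxD hτ0 hτ1 hkle hεm_le hkm)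
    (by positivity) (Real.rpow_nonneg (by positivity) _)
end

section
/- Let f ∈ ℓ₁(ℤ) be non-negative, let m, N ∈ ℕ, p ∈ (0,1), H, μ > 0, and suppose ‖f‖_∞ ≤ 2H and for every integer interval I of cardinality N, |{t ∈ I : f(t) ≥ H}| ≤ μN. Fix integers x₁,…,x_m and define f̃(t) := E_b[f(t + b₁x₁ + … + b_m x_m)], where b₁,…,b_m are independent Bernoulli(p) random variables. Then for every integer interval J of cardinality N, |{t ∈ J : f̃(t) ≥ √2·H}| ≤ μN/(√2 - 1). -/
open Finset

/-- Bernoulli averaging does not create many new spikes: if `f ≤ 2H` and every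
integer interval of length `N` contains at most `μN` points where `f ≥ H`, then
every such interval contains at most `μN/(√2-1)` points where the Bernoulli
average `f̃` is at least `√2·H`. -/
theorem stmt_7 (f : ℤ → ℝ) (hf0 : ∀ t, 0 ≤ f t) (hsum : Summable (fun t => |f t|))
    (m N : ℕ) (p : ℝ) (hp : p ∈ Set.Ioo (0:ℝ) 1) (H μ : ℝ) (hH : 0 < H) (hμ : 0 < μ)
    (hbd : ∀ t, f t ≤ 2 * H)
    (hspikes : ∀ a : ℤ,
      (((Finset.Icc a (a + N - 1)).filter (fun t => H ≤ f t)).card : ℝ) ≤ μ * N)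
    (x : Fin m → ℤ) (ft : ℤ → ℝ)
    (hft : ∀ t, ft t = ∑ v : Fin m → Bool,
      p ^ (Finset.univ.filter (fun i => v i)).card
        * (1 - p) ^ (m - (Finset.univ.filter (fun i => v i)).card)
        * f (t + ∑ i ∈ Finset.univ.filter (fun i => v i), x i)) :
    ∀ a : ℤ,
      (((Finset.Icc a (a + N - 1)).filter (fun t => Real.sqrt 2 * H ≤ ft t)).card : ℝ)
        ≤ μ * N / (Real.sqrt 2 - 1) := by
  obtain ⟨hp0, hp1⟩ := hp
  set w : (Fin m → Bool) → ℝ := fun v =>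
    p ^ (Finset.univ.filter (fun i => v i)).card
      * (1 - p) ^ (m - (Finset.univ.filter (fun i => v i)).card) with hwdef
  set s : (Fin m → Bool) → ℤ := fun v => ∑ i ∈ Finset.univ.filter (fun i => v i), x i with hsdef
  have hw0 : ∀ v, 0 ≤ w v := fun v =>
    mul_nonneg (pow_nonneg hp0.le _) (pow_nonneg (by linarith) _)
  have hwprod : ∀ v : Fin m → Bool, w v = ∏ i, (if v i then p else 1 - p) := by
    intro v
    rw [Finset.prod_ite, Finset.prod_const, Finset.prod_const]
    have h := Finset.card_filter_add_card_filter_not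
      (s := (Finset.univ : Finset (Fin m))) (p := fun i => v i)
    simp only [Finset.card_univ, Fintype.card_fin] at h
    have : (Finset.univ.filter (fun i => ¬ v i)).card
        = m - (Finset.univ.filter (fun i => v i)).card := by omega
    rw [hwdef]
    simp only [this]
  have hw1 : ∑ v : Fin m → Bool, w v = 1 := by
    simp_rw [hwprod]
    rw [← Fintype.piFinset_univ,
      ← Finset.prod_univ_sum (fun _ : Fin m => (Finset.univ : Finset Bool))
        (fun _ b => if b = true then p else 1 - p)]
    simp
  have h2 : (1:ℝ) < Real.sqrt 2 := by
    nlinarith [Real.sq_sqrt (show (0:ℝ) ≤ 2 by norm_num), Real.sqrt_nonneg 2]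
  intro a
  -- indicator
  set I : ℤ → (Fin m → Bool) → ℝ := fun t v => if H ≤ f (t + s v) then 1 else 0 with hIdef
  have hI0 : ∀ t v, 0 ≤ I t v := by
    intro t v; rw [hIdef]; dsimp only; split <;> norm_num
  set g : ℤ → ℝ := fun t => ∑ v : Fin m → Bool, w v * I t v with hgdef
  have hg0 : ∀ t, 0 ≤ g t := fun t =>
    Finset.sum_nonneg fun v _ => mul_nonneg (hw0 v) (hI0 t v)
  have hgb : ∀ t, ft t ≤ H + H * g t := by
    intro t
    rw [hft t]
    have step : ∀ v : Fin m → Bool, w v *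
        f (t + ∑ i ∈ Finset.univ.filter (fun i => v i), x i) ≤ w v * (H + H * I t v) := by
      intro v
      apply mul_le_mul_of_nonneg_left _ (hw0 v)
      rw [hIdef]; dsimp only
      by_cases h : H ≤ f (t + s v)
      · simp only [h, if_true]
        have := hbd (t + s v)
        rw [hsdef] at *
        linarith
      · simp only [h, if_false]
        rw [hsdef] at h
        push_neg at h
        linarith
    calc (∑ v : Fin m → Bool, p ^ (Finset.univ.filter (fun i => v i)).card
        * (1 - p) ^ (m - (Finset.univ.filter (fun i => v i)).card)
        * f (t + ∑ i ∈ Finset.univ.filter (fun i => v i), x i))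
        ≤ ∑ v : Fin m → Bool, w v * (H + H * I t v) :=
          Finset.sum_le_sum (fun v _ => step v)
      _ = H + H * g t := by
          simp_rw [mul_add, Finset.sum_add_distrib, ← Finset.sum_mul, hw1, one_mul,
            mul_left_comm, ← Finset.mul_sum]
          rfl
  set J := Finset.Icc a (a + (N:ℤ) - 1) with hJdef
  set T := J.filter (fun t => Real.sqrt 2 * H ≤ ft t) with hTdef
  have hTg : ∀ t ∈ T, Real.sqrt 2 - 1 ≤ g t := by
    intro t ht
    rw [hTdef, Finset.mem_filter] at ht
    have h1 : Real.sqrt 2 * H ≤ H + H * g t := le_trans ht.2 (hgb t)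
    have h3 : H * (Real.sqrt 2 - 1) ≤ H * g t := by ring_nf; ring_nf at h1; linarith
    exact (mul_le_mul_iff_right₀ hH).mp h3
  have hshift : ∀ c : ℤ, ((J.filter (fun t => H ≤ f (t + c))).card : ℝ) ≤ μ * N := by
    intro c
    have hcard : (J.filter (fun t => H ≤ f (t + c))).card
        = ((Finset.Icc (a + c) (a + c + N - 1)).filter (fun t => H ≤ f t)).card := by
      apply Finset.card_bij (fun t _ => t + c)
      · intro t ht
        rw [Finset.mem_filter, hJdef, Finset.mem_Icc] at ht
        rw [Finset.mem_filter, Finset.mem_Icc]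
        exact ⟨⟨by omega, by omega⟩, ht.2⟩
      · intro t₁ _ t₂ _ h; omega
      · intro u hu
        rw [Finset.mem_filter, Finset.mem_Icc] at hu
        refine ⟨u - c, ?_, by ring⟩
        rw [Finset.mem_filter, hJdef, Finset.mem_Icc]
        refine ⟨⟨by omega, by omega⟩, ?_⟩
        simpa using hu.2
    rw [hcard]
    exact hspikes (a + c)
  have hsum2 : ∑ t ∈ J, g t ≤ μ * N := by
    rw [hgdef]
    dsimp only
    rw [Finset.sum_comm]
    have : ∀ v : Fin m → Bool, ∑ t ∈ J, w v * I t v ≤ w v * (μ * N) := by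
      intro v
      rw [← Finset.mul_sum]
      apply mul_le_mul_of_nonneg_left _ (hw0 v)
      have : ∑ t ∈ J, I t v = ((J.filter (fun t => H ≤ f (t + s v))).card : ℝ) := by
        rw [hIdef]
        simp [Finset.sum_boole]
      rw [this]
      exact hshift (s v)
    calc (∑ v : Fin m → Bool, ∑ t ∈ J, w v * I t v)
        ≤ ∑ v : Fin m → Bool, w v * (μ * N) := Finset.sum_le_sum fun v _ => this v
      _ = μ * N := by rw [← Finset.sum_mul, hw1, one_mul]
  have hmain : (Real.sqrt 2 - 1) * T.card ≤ μ * N := by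
    have h1 : (Real.sqrt 2 - 1) * T.card ≤ ∑ t ∈ T, g t := by
      calc (Real.sqrt 2 - 1) * (T.card : ℝ) = ∑ _t ∈ T, (Real.sqrt 2 - 1) := by
            rw [Finset.sum_const, nsmul_eq_mul, mul_comm]
        _ ≤ ∑ t ∈ T, g t := Finset.sum_le_sum hTg
    have h2' : ∑ t ∈ T, g t ≤ ∑ t ∈ J, g t :=
      Finset.sum_le_sum_of_subset_of_nonneg (Finset.filter_subset _ _)
        (fun t _ _ => hg0 t)
    linarith
  rw [le_div_iff₀ (by linarith)]
  calc ((T.card : ℝ)) * (Real.sqrt 2 - 1) = (Real.sqrt 2 - 1) * T.card := by ring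
    _ ≤ μ * N := hmain
end

section
/- Let f, g ∈ ℓ₁(ℤ), δ ∈ (0, 1/64], κ > 0. Let I ⊂ ℤ be an integer interval, and I₁ ∪ I₂ ∪ I₃ = I a partition with |I₃| ∈ [δ|I|/2, δ|I|], |I₂| ≤ δ|I|, and f(t₁) ≥ κ + f(t₃) for all t₁ ∈ I₁, t₃ ∈ I₃. Let X be uniformly distributed on an integer interval J with |J| ≥ |I|. Then P(|{t ∈ I : |f(t) - g(t+X)| ≥ κ/2}| < δ|I|/4) ≤ 64δ. -/
open MeasureTheory

lemma chunk_bound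
    (f g : ℤ → ℝ) (δ κ : ℝ) (hδ0 : 0 < δ)
    (a₁ a₂ : ℤ) (I : Finset ℤ) (hI : I = Finset.Icc a₁ a₂)
    (I₁ I₂ I₃ : Finset ℤ) (hcover : I₁ ∪ I₂ ∪ I₃ = I)
    (hI₃lo : δ * I.card / 2 ≤ (I₃.card : ℝ)) (hI₃hi : (I₃.card : ℝ) ≤ δ * I.card)
    (hI₂ : (I₂.card : ℝ) ≤ δ * I.card)
    (hgap : ∀ t₁ ∈ I₁, ∀ t₃ ∈ I₃, κ + f t₃ ≤ f t₁)
    (C : Finset ℤ)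
    (hbad : ∀ x ∈ C, ((I.filter fun t => κ / 2 ≤ |f t - g (t + x)|).card : ℝ) < δ * I.card / 4)
    (hdiam : ∀ x ∈ C, ∀ x' ∈ C, x' - x ≤ (I.card : ℤ) - 1) :
    (C.card : ℝ) ≤ 9 * δ * I.card := by
  classical
  rcases C.eq_empty_or_nonempty with hC | hCne
  · subst hC; simp; positivity
  obtain ⟨x₀, hx₀⟩ := hCne
  -- δ * I.card > 0
  have hpos : (0:ℝ) < δ * I.card := by
    have h0 := hbad x₀ hx₀
    have : (0:ℝ) ≤ ((I.filter fun t => κ / 2 ≤ |f t - g (t + x₀)|).card : ℝ) := by positivity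
    linarith
  have hIcard : (0:ℝ) < (I.card : ℝ) := by
    rcases lt_or_ge 0 (I.card : ℝ) with h | h
    · exact h
    · nlinarith
  have hIne : a₁ ≤ a₂ := by
    by_contra h
    push_neg at h
    have : I = ∅ := by rw [hI, Finset.Icc_eq_empty (by omega)]
    rw [this] at hIcard; simp at hIcard
  have hn : (I.card : ℤ) = a₂ - a₁ + 1 := by
    rw [hI, Int.card_Icc]
    omega
  have hI₃pos : (0:ℝ) < (I₃.card : ℝ) := by linarith
  have hI₃ne : I₃.Nonempty := by
    rw [← Finset.card_pos]
    exact_mod_cast hI₃pos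
  set M : ℝ := I₃.sup' hI₃ne f with hM
  obtain ⟨t₃s, ht₃s, hMt⟩ := Finset.exists_mem_eq_sup' hI₃ne f
  have hI₃I : I₃ ⊆ I := hcover ▸ Finset.subset_union_right
  have hI₁I : I₁ ⊆ I := hcover ▸ (Finset.subset_union_left.trans Finset.subset_union_left)
  -- low side: points of I₃ + x outside L are bad
  have h1 : ∀ x ∈ C, ((I₃.filter fun t => ¬ (g (t + x) < M + κ / 2)).card : ℝ) < δ * I.card / 4 := by
    intro x hx
    refine lt_of_le_of_lt ?_ (hbad x hx)
    have hsub : (I₃.filter fun t => ¬ (g (t + x) < M + κ / 2)) ⊆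
        (I.filter fun t => κ / 2 ≤ |f t - g (t + x)|) := by
      intro t ht
      rw [Finset.mem_filter] at ht ⊢
      obtain ⟨ht₃, hg⟩ := ht
      push_neg at hg
      have hfM : f t ≤ M := Finset.le_sup' f ht₃
      refine ⟨hI₃I ht₃, ?_⟩
      have : κ / 2 ≤ g (t + x) - f t := by linarith
      calc κ / 2 ≤ -(f t - g (t + x)) := by linarith
      _ ≤ |f t - g (t + x)| := neg_le_abs _
    exact_mod_cast Nat.cast_le.mpr (Finset.card_le_card hsub)
  -- high side: points of I₁ + x inside L are bad
  have h2 : ∀ x ∈ C, ((I₁.filter fun t => g (t + x) < M + κ / 2).card : ℝ) < δ * I.card / 4 := by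
    intro x hx
    refine lt_of_le_of_lt ?_ (hbad x hx)
    have hsub : (I₁.filter fun t => g (t + x) < M + κ / 2) ⊆
        (I.filter fun t => κ / 2 ≤ |f t - g (t + x)|) := by
      intro t ht
      rw [Finset.mem_filter] at ht ⊢
      obtain ⟨ht₁, hg⟩ := ht
      have hge : κ + M ≤ f t := by
        rw [hM, hMt]
        exact hgap t ht₁ t₃s ht₃s
      refine ⟨hI₁I ht₁, ?_⟩
      calc κ / 2 ≤ f t - g (t + x) := by linarith
      _ ≤ |f t - g (t + x)| := le_abs_self _
    exact_mod_cast Nat.cast_le.mpr (Finset.card_le_card hsub)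
  -- window bound
  have hW : ∀ x ∈ C, (((Finset.Icc (a₁ + x) (a₂ + x)).filter fun s => g s < M + κ / 2).card : ℝ)
      ≤ 9 * (δ * I.card) / 4 := by
    intro x hx
    have hsub : ((Finset.Icc (a₁ + x) (a₂ + x)).filter fun s => g s < M + κ / 2) ⊆
        (((I₁.filter fun t => g (t + x) < M + κ / 2) ∪ I₂ ∪ I₃).image (· + x)) := by
      intro s hs
      rw [Finset.mem_filter, Finset.mem_Icc] at hs
      obtain ⟨⟨hs1, hs2⟩, hgs⟩ := hs
      have htI : s - x ∈ I := by
        rw [hI, Finset.mem_Icc]; omega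
      rw [← hcover] at htI
      rw [Finset.mem_image]
      refine ⟨s - x, ?_, by ring⟩
      simp only [Finset.mem_union] at htI ⊢
      rcases htI with (h | h) | h
      · left; left
        rw [Finset.mem_filter]
        refine ⟨h, ?_⟩
        have heq : s - x + x = s := by ring
        rw [heq]; exact hgs
      · left; right; exact h
      · right; exact h
    have hcard : ((Finset.Icc (a₁ + x) (a₂ + x)).filter fun s => g s < M + κ / 2).card
        ≤ (I₁.filter fun t => g (t + x) < M + κ / 2).card + I₂.card + I₃.card := by
      calc _ ≤ (((I₁.filter fun t => g (t + x) < M + κ / 2) ∪ I₂ ∪ I₃).image (· + x)).card :=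
            Finset.card_le_card hsub
        _ ≤ ((I₁.filter fun t => g (t + x) < M + κ / 2) ∪ I₂ ∪ I₃).card :=
            Finset.card_image_le
        _ ≤ ((I₁.filter fun t => g (t + x) < M + κ / 2) ∪ I₂).card + I₃.card :=
            Finset.card_union_le _ _
        _ ≤ _ := by
            have := Finset.card_union_le (I₁.filter fun t => g (t + x) < M + κ / 2) I₂
            omega
    have := h2 x hx
    have hc : (((Finset.Icc (a₁ + x) (a₂ + x)).filter fun s => g s < M + κ / 2).card : ℝ)
        ≤ ((I₁.filter fun t => g (t + x) < M + κ / 2).card : ℝ) + I₂.card + I₃.card := by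
      exact_mod_cast Nat.cast_le.mpr hcard
    linarith
  set y := C.min' ⟨x₀, hx₀⟩ with hy
  set y' := C.max' ⟨x₀, hx₀⟩ with hy'
  have hymem : y ∈ C := C.min'_mem _
  have hy'mem : y' ∈ C := C.max'_mem _
  set S := (Finset.Icc (a₁ + y) (a₂ + y')).filter fun s => g s < M + κ / 2 with hS
  have hScard : (S.card : ℝ) ≤ 9 * (δ * I.card) / 2 := by
    have hsub : S ⊆ ((Finset.Icc (a₁ + y) (a₂ + y)).filter fun s => g s < M + κ / 2)
        ∪ ((Finset.Icc (a₁ + y') (a₂ + y')).filter fun s => g s < M + κ / 2) := by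
      intro s hs
      rw [hS, Finset.mem_filter, Finset.mem_Icc] at hs
      obtain ⟨⟨hs1, hs2⟩, hgs⟩ := hs
      have hyy' : y' - y ≤ a₂ - a₁ := by
        have := hdiam y hymem y' hy'mem
        omega
      rw [Finset.mem_union]
      rcases le_or_gt s (a₂ + y) with h | h
      · left; rw [Finset.mem_filter, Finset.mem_Icc]; exact ⟨⟨hs1, h⟩, hgs⟩
      · right; rw [Finset.mem_filter, Finset.mem_Icc]
        refine ⟨⟨by omega, hs2⟩, hgs⟩
    have h1' := hW y hymem
    have h2' := hW y' hy'mem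
    have : (S.card : ℝ) ≤ (((Finset.Icc (a₁ + y) (a₂ + y)).filter fun s => g s < M + κ / 2).card : ℝ)
        + (((Finset.Icc (a₁ + y') (a₂ + y')).filter fun s => g s < M + κ / 2).card : ℝ) := by
      have := (Finset.card_le_card hsub).trans (Finset.card_union_le _ _)
      exact_mod_cast Nat.cast_le.mpr this
    linarith
  -- double counting
  set Q := C.biUnion (fun x => (I₃.filter fun t => g (t + x) < M + κ / 2).image (fun t => (x, t)))
    with hQ
  have hQcard : Q.card = ∑ x ∈ C, (I₃.filter fun t => g (t + x) < M + κ / 2).card := by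
    rw [hQ, Finset.card_biUnion]
    · refine Finset.sum_congr rfl fun x _ => ?_
      exact Finset.card_image_of_injective _ (fun a b h => by simpa using h)
    · intro x hx x' hx' hxx'
      rw [Function.onFun, Finset.disjoint_left]
      intro p hp hp'
      simp only [Finset.mem_image] at hp hp'
      obtain ⟨t, _, rfl⟩ := hp
      obtain ⟨t', _, ht'⟩ := hp'
      exact hxx' (by simpa using (Prod.mk.injEq _ _ _ _).mp ht'.symm |>.1)
  have hQlow : (C.card : ℝ) * ((I₃.card : ℝ) / 2) ≤ (Q.card : ℝ) := by
    have hterm : ∀ x ∈ C, (I₃.card : ℝ) / 2 ≤ ((I₃.filter fun t => g (t + x) < M + κ / 2).card : ℝ) := by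
      intro x hx
      have hsplit := Finset.card_filter_add_card_filter_not
        (s := I₃) (p := fun t => g (t + x) < M + κ / 2)
      have h1' := h1 x hx
      have hq : (0:ℝ) ≤ δ * I.card / 4 := by positivity
      have : ((I₃.filter fun t => g (t + x) < M + κ / 2).card : ℝ)
          = (I₃.card : ℝ) - ((I₃.filter fun t => ¬ (g (t + x) < M + κ / 2)).card : ℝ) := by
        have := hsplit
        push_cast [← this]
        ring
      rw [this]
      linarith
    calc (C.card : ℝ) * ((I₃.card : ℝ) / 2) = ∑ _x ∈ C, (I₃.card : ℝ) / 2 := by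
          rw [Finset.sum_const]; ring
      _ ≤ ∑ x ∈ C, ((I₃.filter fun t => g (t + x) < M + κ / 2).card : ℝ) :=
          Finset.sum_le_sum hterm
      _ = (Q.card : ℝ) := by rw [hQcard]; push_cast; ring
  have hQhigh : (Q.card : ℝ) ≤ (S.card : ℝ) * (I₃.card : ℝ) := by
    have hinj : Set.InjOn (fun p : ℤ × ℤ => (p.2 + p.1, p.2)) Q := by
      intro p hp q hq hpq
      simp only [Prod.mk.injEq] at hpq
      obtain ⟨h1', h2'⟩ := hpq
      have : p.1 = q.1 := by omega
      exact Prod.ext this h2'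
    have hmaps : ∀ p ∈ Q, (fun p : ℤ × ℤ => (p.2 + p.1, p.2)) p ∈ S ×ˢ I₃ := by
      intro p hp
      rw [hQ, Finset.mem_biUnion] at hp
      obtain ⟨x, hx, hp⟩ := hp
      rw [Finset.mem_image] at hp
      obtain ⟨t, ht, rfl⟩ := hp
      rw [Finset.mem_filter] at ht
      obtain ⟨ht₃, hgt⟩ := ht
      dsimp only
      rw [Finset.mem_product]
      constructor
      · rw [hS, Finset.mem_filter, Finset.mem_Icc]
        have htI : t ∈ Finset.Icc a₁ a₂ := hI ▸ hI₃I ht₃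
        rw [Finset.mem_Icc] at htI
        have hxy : y ≤ x := C.min'_le x hx
        have hxy' : x ≤ y' := C.le_max' x hx
        exact ⟨⟨by omega, by omega⟩, hgt⟩
      · exact ht₃
    have := Finset.card_le_card_of_injOn _ hmaps hinj
    calc (Q.card : ℝ) ≤ ((S ×ˢ I₃).card : ℝ) := by exact_mod_cast Nat.cast_le.mpr this
      _ = (S.card : ℝ) * (I₃.card : ℝ) := by rw [Finset.card_product]; push_cast; ring
  nlinarith [hQlow, hQhigh, hScard, hI₃pos, hI₃hi]

/-- Averaging lemma: given a partition of an interval `I` into `I₁ ∪ I₂ ∪ I₃`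
where `f` is larger by `κ` on `I₁` than on `I₃`, a uniform random shift `X` of
`g` typically creates at least `δ|I|/4` points of `I` where `|f - g(·+X)| ≥ κ/2`. -/
theorem stmt_9 {Ω : Type*} [MeasurableSpace Ω] (P : Measure Ω)
    [IsProbabilityMeasure P] (f g : ℤ → ℝ)
    (hfsum : Summable fun t => |f t|) (hgsum : Summable fun t => |g t|)
    (δ κ : ℝ) (hδ : δ ∈ Set.Ioc (0:ℝ) (1/64)) (hκ : 0 < κ)
    (a₁ a₂ : ℤ) (I : Finset ℤ) (hI : I = Finset.Icc a₁ a₂)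
    (I₁ I₂ I₃ : Finset ℤ) (hcover : I₁ ∪ I₂ ∪ I₃ = I)
    (hd12 : Disjoint I₁ I₂) (hd13 : Disjoint I₁ I₃) (hd23 : Disjoint I₂ I₃)
    (hI₃lo : δ * I.card / 2 ≤ (I₃.card : ℝ)) (hI₃hi : (I₃.card : ℝ) ≤ δ * I.card)
    (hI₂ : (I₂.card : ℝ) ≤ δ * I.card)
    (hgap : ∀ t₁ ∈ I₁, ∀ t₃ ∈ I₃, κ + f t₃ ≤ f t₁)
    (b₁ b₂ : ℤ) (J : Finset ℤ) (hJ : J = Finset.Icc b₁ b₂) (hJI : I.card ≤ J.card)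
    (X : Ω → ℤ) (hXmeas : Measurable X)
    (hXunif : ∀ j : ℤ, P {ω | X ω = j} = if j ∈ J then ((J.card : ENNReal))⁻¹ else 0) :
    P {ω | ((I.filter fun t => κ / 2 ≤ |f t - g (t + X ω)|).card : ℝ) < δ * I.card / 4}
      ≤ ENNReal.ofReal (64 * δ) := by
  classical
  obtain ⟨hδ0, hδ1⟩ := hδ
  by_cases hn0 : I.card = 0
  · have hE : {ω | ((I.filter fun t => κ / 2 ≤ |f t - g (t + X ω)|).card : ℝ) < δ * I.card / 4}
        = (∅ : Set Ω) := by
      ext ω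
      simp only [Set.mem_setOf_eq, Set.mem_empty_iff_false, iff_false, not_lt, hn0]
      norm_num
    rw [hE]
    simp
  -- main case : I nonempty
  have hn1 : 1 ≤ I.card := Nat.one_le_iff_ne_zero.mpr hn0
  have hJcard : 1 ≤ J.card := le_trans hn1 hJI
  have hbb : b₁ ≤ b₂ := by
    by_contra h
    push_neg at h
    have : J = ∅ := by rw [hJ, Finset.Icc_eq_empty (by omega)]
    rw [this] at hJcard; simp at hJcard
  set Bset : Finset ℤ := J.filter
      (fun x => ((I.filter fun t => κ / 2 ≤ |f t - g (t + x)|).card : ℝ) < δ * I.card / 4)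
    with hBset
  -- combinatorial bound
  have hBcard : (Bset.card : ℝ) ≤ 64 * δ * J.card := by
    set k : ℕ := J.card / I.card + 1 with hk
    set chunk : ℕ → Finset ℤ := fun i => Bset.filter
        (fun x => b₁ + (i : ℤ) * I.card ≤ x ∧ x < b₁ + ((i : ℤ) + 1) * I.card) with hchunk
    have hsub : Bset ⊆ (Finset.range k).biUnion chunk := by
      intro x hx
      have hxJ : x ∈ J := Finset.mem_filter.mp hx |>.1
      rw [hJ, Finset.mem_Icc] at hxJ
      have hNcard : (J.card : ℤ) = b₂ - b₁ + 1 := by rw [hJ, Int.card_Icc]; omega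
      obtain ⟨d, hdval⟩ : ∃ d : ℕ, (d : ℤ) = x - b₁ :=
        ⟨(x - b₁).toNat, Int.toNat_of_nonneg (by omega)⟩
      have hdN : d < J.card := by omega
      have hIpos : 0 < I.card := hn1
      have h1 : d / I.card * I.card ≤ d := Nat.div_mul_le_self d I.card
      have h2 : d < (d / I.card + 1) * I.card := by
        have hmod := (Nat.div_add_mod d I.card).symm
        have hlt : d % I.card < I.card := Nat.mod_lt _ hIpos
        calc d = I.card * (d / I.card) + d % I.card := hmod
          _ < I.card * (d / I.card) + I.card := by omega
          _ = (d / I.card + 1) * I.card := by ring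
      have h3 : d / I.card ≤ J.card / I.card := Nat.div_le_div_right (le_of_lt hdN)
      refine Finset.mem_biUnion.mpr ⟨d / I.card, Finset.mem_range.mpr (by omega), ?_⟩
      rw [hchunk, Finset.mem_filter]
      refine ⟨hx, ?_, ?_⟩
      · have hc : ((d / I.card * I.card : ℕ) : ℤ) ≤ (d : ℤ) := by exact_mod_cast h1
        push_cast at hc ⊢
        omega
      · have hc : ((d : ℕ) : ℤ) < (((d / I.card + 1) * I.card : ℕ) : ℤ) := by exact_mod_cast h2
        push_cast at hc ⊢
        omega
    have hchunkcard : ∀ i ∈ Finset.range k, ((chunk i).card : ℝ) ≤ 9 * δ * I.card := by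
      intro i _
      refine chunk_bound f g δ κ hδ0 a₁ a₂ I hI I₁ I₂ I₃ hcover hI₃lo hI₃hi hI₂ hgap
        (chunk i) ?_ ?_
      · intro x hx
        rw [hchunk, Finset.mem_filter] at hx
        exact (Finset.mem_filter.mp hx.1).2
      · intro x hx x' hx'
        rw [hchunk, Finset.mem_filter] at hx hx'
        obtain ⟨-, hx1, -⟩ := hx
        obtain ⟨-, -, hx'2⟩ := hx'
        have hmul : ((i : ℤ) + 1) * (I.card : ℤ) = (i : ℤ) * I.card + I.card := by ring
        omega
    have hsum : (Bset.card : ℝ) ≤ (k : ℝ) * (9 * δ * I.card) := by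
      have h1 : Bset.card ≤ ∑ i ∈ Finset.range k, (chunk i).card :=
        (Finset.card_le_card hsub).trans (Finset.card_biUnion_le)
      have h2 : ((∑ i ∈ Finset.range k, (chunk i).card : ℕ) : ℝ)
          ≤ ∑ i ∈ Finset.range k, (9 * δ * I.card) := by
        push_cast
        exact Finset.sum_le_sum hchunkcard
      rw [Finset.sum_const, Finset.card_range] at h2
      calc (Bset.card : ℝ) ≤ ((∑ i ∈ Finset.range k, (chunk i).card : ℕ) : ℝ) := by
            exact_mod_cast h1
        _ ≤ k • (9 * δ * I.card) := h2
        _ = (k : ℝ) * (9 * δ * I.card) := by rw [nsmul_eq_mul]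
    have hkn : (k : ℝ) * (I.card : ℝ) ≤ 2 * J.card := by
      have : k * I.card ≤ 2 * J.card := by
        rw [hk]
        have h1 : (J.card / I.card) * I.card ≤ J.card := Nat.div_mul_le_self _ _
        have : (J.card / I.card + 1) * I.card = (J.card / I.card) * I.card + I.card := by ring
        omega
      exact_mod_cast this
    have hIpos : (0:ℝ) ≤ (I.card : ℝ) := by positivity
    have hJpos : (0:ℝ) ≤ (J.card : ℝ) := by positivity
    calc (Bset.card : ℝ) ≤ (k : ℝ) * (9 * δ * I.card) := hsum
      _ = 9 * δ * ((k : ℝ) * I.card) := by ring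
      _ ≤ 9 * δ * (2 * J.card) := by
          apply mul_le_mul_of_nonneg_left hkn (by positivity)
      _ = 18 * δ * J.card := by ring
      _ ≤ 64 * δ * J.card := by nlinarith
  -- measure-theoretic part
  set E : Set Ω := {ω | ((I.filter fun t => κ / 2 ≤ |f t - g (t + X ω)|).card : ℝ) < δ * I.card / 4}
    with hE
  have hmeasj : ∀ j : ℤ, MeasurableSet {ω | X ω = j} := by
    intro j
    exact hXmeas (measurableSet_singleton j)
  have hXJ : P (⋃ j ∈ J, {ω | X ω = j}) = 1 := by
    rw [measure_biUnion_finset ?_ (fun j _ => hmeasj j)]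
    · rw [Finset.sum_congr rfl (fun j hj => by rw [hXunif j, if_pos hj])]
      rw [Finset.sum_const, nsmul_eq_mul]
      rw [ENNReal.mul_inv_cancel]
      · exact_mod_cast (Nat.pos_of_ne_zero (by omega)).ne'
      · exact ENNReal.natCast_ne_top _
    · intro i _ j _ hij
      rw [Function.onFun, Set.disjoint_left]
      rintro ω (hi : X ω = i) (hj : X ω = j)
      exact hij (hi ▸ hj ▸ rfl)
  have hcompl : P ((⋃ j ∈ J, {ω | X ω = j})ᶜ) = 0 := by
    rw [measure_compl (Finset.measurableSet_biUnion _ (fun j _ => hmeasj j))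
      (measure_ne_top P _)]
    rw [hXJ, measure_univ, tsub_self]
  have hEsub : E ⊆ (⋃ j ∈ Bset, {ω | X ω = j}) ∪ (⋃ j ∈ J, {ω | X ω = j})ᶜ := by
    intro ω hω
    by_cases hXω : X ω ∈ J
    · left
      have hmem : X ω ∈ Bset := by
        rw [hBset]
        exact Finset.mem_filter.mpr ⟨hXω, hω⟩
      exact Set.mem_biUnion hmem rfl
    · right
      simp only [Set.mem_compl_iff, Set.mem_iUnion, not_exists]
      rintro j hj rfl
      exact hXω hj
  calc P E ≤ P ((⋃ j ∈ Bset, {ω | X ω = j}) ∪ (⋃ j ∈ J, {ω | X ω = j})ᶜ) :=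
        measure_mono hEsub
    _ ≤ P (⋃ j ∈ Bset, {ω | X ω = j}) + P ((⋃ j ∈ J, {ω | X ω = j})ᶜ) :=
        measure_union_le _ _
    _ = P (⋃ j ∈ Bset, {ω | X ω = j}) := by rw [hcompl, add_zero]
    _ ≤ ∑ j ∈ Bset, P {ω | X ω = j} := measure_biUnion_finset_le _ _
    _ = (Bset.card : ENNReal) * ((J.card : ENNReal))⁻¹ := by
        rw [Finset.sum_congr rfl (fun j hj => by
          rw [hXunif j, if_pos (Finset.mem_filter.mp hj).1])]
        rw [Finset.sum_const, nsmul_eq_mul]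
    _ ≤ ENNReal.ofReal (64 * δ) := by
        have hJ0 : ((J.card : ℕ) : ENNReal) ≠ 0 := by
          exact_mod_cast (Nat.pos_of_ne_zero (by omega)).ne'
        have hJtop : ((J.card : ℕ) : ENNReal) ≠ ⊤ := ENNReal.natCast_ne_top _
        have h1 : (Bset.card : ENNReal) ≤ ENNReal.ofReal (64 * δ) * (J.card : ENNReal) := by
          have : (Bset.card : ENNReal) = ENNReal.ofReal ((Bset.card : ℝ)) := by
            rw [ENNReal.ofReal_natCast]
          rw [this, ← ENNReal.ofReal_natCast J.card, ← ENNReal.ofReal_mul (by positivity)]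
          exact ENNReal.ofReal_le_ofReal hBcard
        calc (Bset.card : ENNReal) * ((J.card : ENNReal))⁻¹
            ≤ (ENNReal.ofReal (64 * δ) * (J.card : ENNReal)) * ((J.card : ENNReal))⁻¹ :=
              mul_le_mul_left h1 _
          _ = ENNReal.ofReal (64 * δ) := by
              rw [mul_assoc, ENNReal.mul_inv_cancel hJ0 hJtop, mul_one]
end

section
/- For a vector x ∈ ℝⁿ with at least k coordinates satisfying |x_i| ≥ ν/√n (for some ν > 0 and integer k ≥ 1), and independent Bernoulli(p) random variables b₁,…,b_n with p ∈ (0,1/2], there is a constant C > 0 depending only on p such that L(∑_{i=1}^n b_i x_i, νt/√n) ≤ C·t/√k for all t ≥ 1. -/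
open MeasureTheory ProbabilityTheory

section Auxiliary
open Finset


lemma binom_sum_one (p q : ℝ) (hpq : p + q = 1) (m : ℕ) :
    ∑ j ∈ range (m+1), (m.choose j : ℝ) * p^j * q^(m-j) = 1 := by
  have h := add_pow p q m
  rw [hpq, one_pow] at h
  rw [h]
  exact Finset.sum_congr rfl (fun j hj => by ring)

lemma binom_identity (p q : ℝ) (m j : ℕ) (hj : j < m) :
    (m.choose (j+1) : ℝ) * p^(j+1) * q^(m-(j+1)) * ((j:ℝ)+1) * q
      = (m.choose j : ℝ) * p^j * q^(m-j) * ((m:ℝ) - j) * p := by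
  have h1 : (m.choose (j+1) * (j+1) : ℕ) = m.choose j * (m - j) := Nat.choose_succ_right_eq m j
  have h2 : (q:ℝ)^(m-(j+1)) * q = q^(m-j) := by
    rw [← pow_succ]
    congr 1
    omega
  have h3 : ((m:ℝ) - j) = ((m - j : ℕ) : ℝ) := by
    rw [Nat.cast_sub hj.le]
  have h4 : ((m.choose (j+1) : ℝ)) * ((j:ℝ)+1) = (m.choose j : ℝ) * ((m:ℝ) - j) := by
    rw [h3]
    exact_mod_cast congrArg (Nat.cast (R := ℝ)) h1
  calc (m.choose (j+1) : ℝ) * p^(j+1) * q^(m-(j+1)) * ((j:ℝ)+1) * q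
      = ((m.choose (j+1) : ℝ) * ((j:ℝ)+1)) * p^(j+1) * (q^(m-(j+1)) * q) := by ring
    _ = ((m.choose j : ℝ) * ((m:ℝ) - j)) * p^(j+1) * q^(m-j) := by rw [h4, h2]
    _ = (m.choose j : ℝ) * p^j * q^(m-j) * ((m:ℝ) - j) * p := by rw [pow_succ]; ring

lemma binom_term_le_one (p q : ℝ) (hp : 0 ≤ p) (hq : 0 ≤ q) (hpq : p + q = 1) (m j : ℕ) :
    (m.choose j : ℝ) * p^j * q^(m-j) ≤ 1 := by
  rcases le_or_gt j m with hj | hj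
  · calc (m.choose j : ℝ) * p^j * q^(m-j)
        ≤ ∑ i ∈ range (m+1), (m.choose i : ℝ) * p^i * q^(m-i) :=
          Finset.single_le_sum (f := fun i => (m.choose i : ℝ) * p^i * q^(m-i))
            (fun i _ => by positivity) (by simp [Nat.lt_succ_iff, hj])
      _ = 1 := binom_sum_one p q hpq m
  · simp [Nat.choose_eq_zero_of_lt hj]

set_option maxHeartbeats 2000000 in
lemma binom_max (p q : ℝ) (hp : 0 < p) (hq : 0 < q) (hpq : p + q = 1) (m : ℕ) (hm : 1 ≤ m)
    (j : ℕ) : (m.choose j : ℝ) * p^j * q^(m-j) ≤ 16 / Real.sqrt (p*q*m) := by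
  have hpqm : 0 < p*q*(m:ℝ) := by positivity
  have hs : 0 < Real.sqrt (p*q*m) := Real.sqrt_pos.2 hpqm
  rcases le_or_gt (p*q*(m:ℝ)) 256 with hcase | hcase
  · -- small case
    have h16 : Real.sqrt (p*q*m) ≤ 16 := by
      rw [show (16:ℝ) = Real.sqrt 256 by
        rw [show (256:ℝ) = 16^2 by norm_num, Real.sqrt_sq (by norm_num)]]
      exact Real.sqrt_le_sqrt hcase
    have : (1:ℝ) ≤ 16 / Real.sqrt (p*q*m) := by
      rw [le_div_iff₀ hs]; linarith
    exact (binom_term_le_one p q hp.le hq.le hpq m j).trans this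
  · -- large case
    set b : ℕ → ℝ := fun j => (m.choose j : ℝ) * p^j * q^(m-j) with hb_def
    have hb0 : ∀ j, 0 ≤ b j := fun j => by positivity
    set s : ℝ := Real.sqrt (p*q*m) with hs_def
    have hs2 : s^2 = p*q*m := Real.sq_sqrt hpqm.le
    have hs16 : 16 < s := by
      nlinarith [hs.le]
    have hpq4 : p*q ≤ 1/4 := by nlinarith [sq_nonneg (p-q)]
    have hq1 : q ≤ 1 := by linarith
    have hp1 : p ≤ 1 := by linarith
    have hm1024 : (1024:ℝ) < m := by nlinarith
    obtain ⟨j₀, hj₀mem, hj₀max⟩ := (range (m+1)).exists_max_image b ⟨0, by simp⟩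
    set M : ℝ := b j₀ with hM_def
    have hM0 : 0 < M := by
      have := hj₀max 0 (by simp)
      have hb00 : b 0 = q^m := by simp [hb_def]
      nlinarith [pow_pos hq m]
    have hj₀m : j₀ ≤ m := by simpa [Nat.lt_succ_iff] using hj₀mem
    -- mode location
    have hj₀p : (j₀ : ℝ) ≤ ((m:ℝ)+1)*p := by
      rcases Nat.eq_zero_or_pos j₀ with h0 | h0
      · simp only [h0, Nat.cast_zero]; positivity
      · obtain ⟨j', rfl⟩ : ∃ j', j₀ = j' + 1 := ⟨j₀ - 1, by omega⟩
        have hj'm : j' < m := by omega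
        have hid := binom_identity p q m j' hj'm
        have hle : b j' ≤ M := hj₀max j' (by simp; omega)
        have hj'r : (j':ℝ) < m := by exact_mod_cast hj'm
        have hmj' : (0:ℝ) ≤ ((m:ℝ) - j') * p := mul_nonneg (by linarith) hp.le
        have h1 : M * ((j':ℝ)+1) * q ≤ M * ((m:ℝ) - j') * p := by
          calc M * ((j':ℝ)+1) * q = b j' * ((m:ℝ) - j') * p := by
                rw [hM_def]; exact hid
            _ ≤ M * ((m:ℝ) - j') * p := by nlinarith
        have h2 : ((j':ℝ)+1) * q ≤ ((m:ℝ) - j') * p := by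
          calc ((j':ℝ)+1) * q = M⁻¹ * (M * ((j':ℝ)+1) * q) := by field_simp
            _ ≤ M⁻¹ * (M * ((m:ℝ) - j') * p) := by
                apply mul_le_mul_of_nonneg_left h1 (le_of_lt (inv_pos.2 hM0))
            _ = ((m:ℝ) - j') * p := by field_simp
        push_cast
        nlinarith
    set L : ℕ := ⌊s/4⌋₊ with hL_def
    have hLle : (L:ℝ) ≤ s/4 := Nat.floor_le (by positivity)
    have hLgt : s/4 < (L:ℝ) + 1 := Nat.lt_floor_add_one _
    have hL1 : (L:ℝ) + 1 ≤ 3*s/8 := by nlinarith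
    set ε : ℝ := 2*((L:ℝ)+1)/(p*q*m) with hε_def
    have hε0 : 0 ≤ ε := by positivity
    have hεmul : ε * (p*q*m) = 2*((L:ℝ)+1) := by
      rw [hε_def, div_mul_cancel₀ _ hpqm.ne']
    have hεs : ε ≤ 3/(4*s) := by
      rw [hε_def, div_le_div_iff₀ hpqm (by positivity)]
      calc 2*((L:ℝ)+1) * (4*s) ≤ (3*s/4)*(4*s) :=
            mul_le_mul_of_nonneg_right (by linarith) (by positivity)
        _ = 3*(s^2) := by ring
        _ = 3*(p*q*(m:ℝ)) := by rw [hs2]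
    have hε1 : ε ≤ 1/2 := by
      have : 3/(4*s) ≤ 1/2 := by
        rw [div_le_iff₀ (by positivity)]
        nlinarith
      linarith
    have hLε : (L:ℝ)*ε ≤ 1/2 := by
      calc (L:ℝ)*ε ≤ (s/4) * (3/(4*s)) := by
            apply mul_le_mul hLle hεs hε0 (by positivity)
        _ = 3/16 := by field_simp; ring
        _ ≤ 1/2 := by norm_num
    have hsm : s ≤ Real.sqrt (m:ℝ) / 2 := by
      rw [hs_def, show Real.sqrt (m:ℝ)/2 = Real.sqrt ((m:ℝ)/4) by
        rw [show (m:ℝ)/4 = (m:ℝ) * (1/2)^2 by ring, Real.sqrt_mul' _ (by positivity)]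
        rw [Real.sqrt_sq (by norm_num)]; ring]
      apply Real.sqrt_le_sqrt
      nlinarith
    have hsqm : Real.sqrt (m:ℝ) ^ 2 = (m:ℝ) := Real.sq_sqrt (by positivity)
    have hjL : (j₀:ℝ) + L < m := by
      nlinarith [Real.sqrt_nonneg (m:ℝ)]
    -- the step inequality
    have step : ∀ i, i < L → b (j₀+i) * (1-ε) ≤ b (j₀+i+1) := by
      intro i hi
      set j : ℕ := j₀ + i with hj_def
      have hjm : j < m := by
        have : (j:ℝ) < m := by
          push_cast [hj_def]
          have : (i:ℝ) < L := by exact_mod_cast hi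
          linarith
        exact_mod_cast this
      have hid := binom_identity p q m j hjm
      have hkey : (1-ε) * (((j:ℝ)+1) * q) ≤ ((m:ℝ)-j) * p := by
        have hup : ((j:ℝ)+1) * q ≤ p*q*m + ((L:ℝ)+1) := by
          have h1 : (j:ℝ)+1 ≤ (j₀:ℝ) + L := by
            push_cast [hj_def]
            have : (i:ℝ) + 1 ≤ L := by exact_mod_cast hi
            linarith
          have h2 : (j:ℝ)+1 ≤ ((m:ℝ)+1)*p + L := by linarith
          nlinarith
        have hdown : p*q*m - ((L:ℝ)+1) ≤ ((m:ℝ)-j) * p := by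
          have hsum : ((m:ℝ)+1)*p + ((m:ℝ)+1)*q = (m:ℝ)+1 := by
            rw [← mul_add, hpq, mul_one]
          have h1 : (m:ℝ) - j ≥ ((m:ℝ)+1)*q - L := by
            push_cast [hj_def]
            have : (i:ℝ) + 1 ≤ L := by exact_mod_cast hi
            linarith
          nlinarith
        nlinarith
      have hjq : 0 < ((j:ℝ)+1) * q := by positivity
      have h3 : b j * ((1-ε) * (((j:ℝ)+1) * q)) ≤ b (j+1) * (((j:ℝ)+1) * q) := by
        calc b j * ((1-ε) * (((j:ℝ)+1) * q)) ≤ b j * (((m:ℝ)-j) * p) := by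
              apply mul_le_mul_of_nonneg_left hkey (hb0 j)
          _ = b (j+1) * (((j:ℝ)+1) * q) := by
              rw [show b j * (((m:ℝ)-j) * p) = b j * ((m:ℝ)-j) * p by ring, ← hid]; ring
      have h3' : (b j * (1-ε)) * (((j:ℝ)+1) * q) ≤ b (j+1) * (((j:ℝ)+1) * q) := by
        calc (b j * (1-ε)) * (((j:ℝ)+1)*q) = b j * ((1-ε) * (((j:ℝ)+1)*q)) := by ring
          _ ≤ b (j+1) * (((j:ℝ)+1)*q) := h3
      exact le_of_mul_le_mul_right h3' hjq
    -- induction lower bound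
    have lower : ∀ i, i ≤ L → M * (1 - (i:ℝ)*ε) ≤ b (j₀ + i) := by
      intro i
      induction i with
      | zero => intro _; simp [hM_def]
      | succ i ih =>
        intro hi
        have hiL : i < L := hi
        have h1 := ih hiL.le
        have h2 := step i hiL
        have : M * (1 - (i:ℝ)*ε) * (1-ε) ≤ b (j₀+i) * (1-ε) := by
          apply mul_le_mul_of_nonneg_right h1 (by linarith)
        have h4 : M * (1 - ((i:ℝ)+1)*ε) ≤ M * (1 - (i:ℝ)*ε) * (1-ε) := by
          nlinarith [mul_nonneg (sq_nonneg ((i:ℝ))) (sq_nonneg ε), sq_nonneg ε,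
            mul_nonneg (Nat.cast_nonneg i : (0:ℝ) ≤ i) (mul_self_nonneg ε)]
        show M * (1 - ((i+1:ℕ):ℝ)*ε) ≤ b (j₀ + i + 1)
        push_cast
        linarith
    have half : ∀ i, i ≤ L → M/2 ≤ b (j₀ + i) := by
      intro i hi
      have h1 := lower i hi
      have h2 : (i:ℝ)*ε ≤ (L:ℝ)*ε := by
        apply mul_le_mul_of_nonneg_right _ hε0
        exact_mod_cast hi
      nlinarith
    -- summation
    have hsum : ((L:ℝ)+1) * (M/2) ≤ 1 := by
      have hsub : (range (L+1)).image (fun i => j₀ + i) ⊆ range (m+1) := by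
        intro j hj
        simp only [mem_image, mem_range] at hj ⊢
        obtain ⟨i, hi, rfl⟩ := hj
        have h1 : (i:ℝ) ≤ L := by exact_mod_cast Nat.lt_succ_iff.1 hi
        have h2 : ((j₀ + i : ℕ):ℝ) < (m:ℝ) + 1 := by push_cast; linarith
        exact_mod_cast h2
      calc ((L:ℝ)+1) * (M/2) = ∑ i ∈ range (L+1), M/2 := by
            simp [mul_comm]
        _ ≤ ∑ i ∈ range (L+1), b (j₀ + i) :=
            Finset.sum_le_sum (fun i hi => half i (Nat.lt_succ_iff.1 (mem_range.1 hi)))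
        _ = ∑ j ∈ (range (L+1)).image (fun i => j₀ + i), b j :=
            (Finset.sum_image (fun a _ c _ h => by simpa using h)).symm
        _ ≤ ∑ j ∈ range (m+1), b j :=
            Finset.sum_le_sum_of_subset_of_nonneg hsub (fun j _ _ => hb0 j)
        _ = 1 := binom_sum_one p q hpq m
    have hMs : M ≤ 16/s := by
      have h1 : s/4 * (M/2) ≤ 1 := by nlinarith
      rw [le_div_iff₀ hs]
      nlinarith
    rcases le_or_gt j m with hj | hj
    · have := hj₀max j (by simp [Nat.lt_succ_iff, hj])
      calc (m.choose j : ℝ) * p^j * q^(m-j) = b j := rfl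
        _ ≤ M := this
        _ ≤ 16/s := hMs
    · simp only [Nat.choose_eq_zero_of_lt hj, Nat.cast_zero, zero_mul]
      positivity

lemma antichain_weight_le {α : Type} [Fintype α] [DecidableEq α] (p q B : ℝ)
    (hp : 0 ≤ p) (hq : 0 ≤ q) (hB : 0 ≤ B)
    (𝒜 : Finset (Finset α)) (h𝒜 : IsAntichain (· ⊆ ·) (𝒜 : Set (Finset α)))
    (hBj : ∀ r, ((Fintype.card α).choose r : ℝ) * p^r * q^(Fintype.card α - r) ≤ B) :
    ∑ A ∈ 𝒜, p^A.card * q^(Fintype.card α - A.card) ≤ B := by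
  classical
  set N := Fintype.card α with hN
  have hfib : ∑ A ∈ 𝒜, p^A.card * q^(N - A.card)
      = ∑ r ∈ range (N+1), ∑ A ∈ 𝒜.filter (fun A => A.card = r),
          p^A.card * q^(N - A.card) := by
    rw [Finset.sum_fiberwise_of_maps_to]
    intro A hA
    simp only [mem_range, Nat.lt_succ_iff]
    exact hN ▸ Finset.card_le_univ A
  have key : ∀ r ∈ range (N+1),
      ∑ A ∈ 𝒜.filter (fun A => A.card = r), p^A.card * q^(N - A.card)
        ≤ ((𝒜 # r).card : ℝ) / (N.choose r) * B := by
    intro r hr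
    have hrN : r ≤ N := Nat.lt_succ_iff.1 (mem_range.1 hr)
    have hch : (0:ℝ) < N.choose r := by exact_mod_cast Nat.choose_pos hrN
    have h1 : ∑ A ∈ 𝒜.filter (fun A => A.card = r), p^A.card * q^(N - A.card)
        = ((𝒜 # r).card : ℝ) * (p^r * q^(N-r)) := by
      rw [show (𝒜 # r) = 𝒜.filter (fun A => A.card = r) from rfl]
      rw [Finset.sum_congr rfl (fun A hA => by
        rw [(Finset.mem_filter.1 hA).2])]
      rw [Finset.sum_const, nsmul_eq_mul]
    rw [h1]
    have h2 : ((𝒜 # r).card : ℝ) * (p^r * q^(N-r))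
        = ((𝒜 # r).card : ℝ) / (N.choose r) * ((N.choose r : ℝ) * p^r * q^(N-r)) := by
      field_simp
    rw [h2]
    exact mul_le_mul_of_nonneg_left (hBj r) (by positivity)
  calc ∑ A ∈ 𝒜, p^A.card * q^(N - A.card)
      ≤ ∑ r ∈ range (N+1), ((𝒜 # r).card : ℝ) / (N.choose r) * B := by
        rw [hfib]; exact Finset.sum_le_sum key
    _ = (∑ r ∈ range (N+1), ((𝒜 # r).card : ℝ) / (N.choose r)) * B := by
        rw [Finset.sum_mul]
    _ ≤ 1 * B := mul_le_mul_of_nonneg_right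
        (Finset.sum_card_slice_div_choose_le_one h𝒜) hB
    _ = B := one_mul B

lemma window_sum_le {α : Type} [Fintype α] [DecidableEq α] (p q B δ : ℝ) (hδ : 0 < δ)
    (hp : 0 ≤ p) (hq : 0 ≤ q) (hB : 0 ≤ B)
    (hBj : ∀ r, ((Fintype.card α).choose r : ℝ) * p^r * q^(Fintype.card α - r) ≤ B)
    (x : α → ℝ) (hx : ∀ i, δ ≤ x i) (a : ℝ) :
    ∑ A ∈ (univ : Finset (Finset α)).filter
        (fun A => a ≤ ∑ i ∈ A, x i ∧ ∑ i ∈ A, x i < a + δ),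
      p^A.card * q^(Fintype.card α - A.card) ≤ B := by
  apply antichain_weight_le p q B hp hq hB _ _ hBj
  intro A hA B' hB' hne hsub
  simp only [coe_filter, Set.mem_setOf_eq, mem_univ, true_and] at hA hB'
  have hssub : A ⊆ B' := hsub
  have hne' : (B' \ A).Nonempty := by
    rw [Finset.sdiff_nonempty]
    intro h
    exact hne (Finset.Subset.antisymm hssub h)
  have hsum : ∑ i ∈ B', x i = ∑ i ∈ A, x i + ∑ i ∈ B' \ A, x i := by
    rw [← Finset.sum_sdiff hssub]; ring
  have hge : δ ≤ ∑ i ∈ B' \ A, x i := by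
    obtain ⟨i₀, hi₀⟩ := hne'
    have h1 : ({i₀} : Finset α) ⊆ B' \ A := by simpa using hi₀
    calc δ = ∑ _i ∈ ({i₀} : Finset α), δ := by simp
      _ ≤ ∑ _i ∈ B' \ A, δ :=
          Finset.sum_le_sum_of_subset_of_nonneg h1 (fun _ _ _ => hδ.le)
      _ ≤ ∑ i ∈ B' \ A, x i := Finset.sum_le_sum (fun i _ => hx i)
  linarith [hA.1, hA.2, hB'.1, hB'.2]

lemma core_fintype {α : Type} [Fintype α] [DecidableEq α] (p q B δ t lam : ℝ) (hδ : 0 < δ)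
    (hp : 0 ≤ p) (hq : 0 ≤ q) (hB : 0 ≤ B) (ht : 1 ≤ t)
    (hBj : ∀ r, ((Fintype.card α).choose r : ℝ) * p^r * q^(Fintype.card α - r) ≤ B)
    (x : α → ℝ) (hx : ∀ i, δ ≤ x i) :
    ∑ A ∈ (univ : Finset (Finset α)).filter
        (fun A => |(∑ i ∈ A, x i) - lam| ≤ t*δ),
      p^A.card * q^(Fintype.card α - A.card) ≤ 3*t*B := by
  classical
  set a : ℝ := lam - t*δ with ha
  set g : Finset α → ℕ := fun A => ⌊((∑ i ∈ A, x i) - a)/δ⌋₊ with hg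
  set S := (univ : Finset (Finset α)).filter (fun A => |(∑ i ∈ A, x i) - lam| ≤ t*δ) with hS
  have hmaps : ∀ A ∈ S, g A ∈ range (⌊2*t⌋₊ + 1) := by
    intro A hA
    have hcond := (Finset.mem_filter.1 hA).2
    have h1 : (∑ i ∈ A, x i) - a ≤ 2*t*δ := by
      rw [ha]; cases abs_le.1 hcond; linarith
    simp only [mem_range, Nat.lt_succ_iff, hg]
    apply Nat.floor_le_floor (R := ℝ)
    rw [div_le_iff₀ hδ]
    linarith
  rw [← Finset.sum_fiberwise_of_maps_to hmaps]
  have hfiber : ∀ v ∈ range (⌊2*t⌋₊ + 1),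
      ∑ A ∈ S.filter (fun A => g A = v), p^A.card * q^(Fintype.card α - A.card) ≤ B := by
    intro v _
    have hsub : S.filter (fun A => g A = v) ⊆ (univ : Finset (Finset α)).filter
        (fun A => a + v*δ ≤ ∑ i ∈ A, x i ∧ ∑ i ∈ A, x i < a + v*δ + δ) := by
      intro A hA
      rw [Finset.mem_filter] at hA ⊢
      obtain ⟨hAS, hgA⟩ := hA
      have hcond := (Finset.mem_filter.1 hAS).2
      have hge0 : 0 ≤ (∑ i ∈ A, x i) - a := by
        rw [ha]; cases abs_le.1 hcond; linarith
      have hfloor := Nat.floor_eq_iff (by positivity : (0:ℝ) ≤ ((∑ i ∈ A, x i) - a)/δ) |>.1 hgA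
      obtain ⟨hlo, hhi⟩ := hfloor
      rw [le_div_iff₀ hδ] at hlo
      rw [div_lt_iff₀ hδ] at hhi
      refine ⟨mem_univ A, by push_cast at hlo ⊢; linarith, by push_cast at hhi ⊢; linarith⟩
    calc ∑ A ∈ S.filter (fun A => g A = v), p^A.card * q^(Fintype.card α - A.card)
        ≤ ∑ A ∈ (univ : Finset (Finset α)).filter
            (fun A => a + v*δ ≤ ∑ i ∈ A, x i ∧ ∑ i ∈ A, x i < a + v*δ + δ),
            p^A.card * q^(Fintype.card α - A.card) :=
          Finset.sum_le_sum_of_subset_of_nonneg hsub (fun A _ _ => by positivity)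
      _ ≤ B := window_sum_le p q B δ hδ hp hq hB hBj x hx (a + v*δ)
  calc ∑ v ∈ range (⌊2*t⌋₊ + 1), ∑ A ∈ S.filter (fun A => g A = v),
        p^A.card * q^(Fintype.card α - A.card)
      ≤ ∑ v ∈ range (⌊2*t⌋₊ + 1), B := Finset.sum_le_sum hfiber
    _ = ((⌊2*t⌋₊ : ℝ) + 1) * B := by
        rw [Finset.sum_const, Finset.card_range, nsmul_eq_mul]
        push_cast; ring
    _ ≤ 3*t*B := by
        have h1 : (⌊2*t⌋₊ : ℝ) ≤ 2*t := Nat.floor_le (by linarith)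
        nlinarith

lemma transfer_sum {n : ℕ} (T : Finset (Fin n)) (p q B δ t lam : ℝ) (hδ : 0 < δ)
    (hp : 0 ≤ p) (hq : 0 ≤ q) (hB : 0 ≤ B) (ht : 1 ≤ t)
    (hBj : ∀ r, ((T.card).choose r : ℝ) * p^r * q^(T.card - r) ≤ B)
    (x : Fin n → ℝ) (hx : ∀ i ∈ T, δ ≤ x i) :
    ∑ A ∈ T.powerset.filter (fun A => |(∑ i ∈ A, x i) - lam| ≤ t*δ),
      p^A.card * q^(T.card - A.card) ≤ 3*t*B := by
  classical
  have hcard : Fintype.card {i : Fin n // i ∈ T} = T.card := Fintype.card_coe T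
  have hmain := core_fintype (α := {i : Fin n // i ∈ T}) p q B δ t lam hδ hp hq hB ht
    (by rw [hcard]; exact hBj) (fun j => x j.1) (fun j => hx j.1 j.2)
  rw [hcard] at hmain
  refine le_trans (le_of_eq ?_) hmain
  apply Finset.sum_nbij' (i := fun A => A.subtype (· ∈ T))
    (j := fun s => s.map (Function.Embedding.subtype (· ∈ T)))
  · intro A hA
    rw [Finset.mem_filter] at hA ⊢
    obtain ⟨hApow, hAcond⟩ := hA
    have hAT : A ⊆ T := Finset.mem_powerset.1 hApow
    have hsum : ∑ j ∈ A.subtype (· ∈ T), x j.1 = ∑ i ∈ A, x i := by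
      rw [Finset.sum_subtype_of_mem _ hAT]
    exact ⟨mem_univ _, by rw [hsum]; exact hAcond⟩
  · intro s hs
    rw [Finset.mem_filter] at hs ⊢
    have hsub : s.map (Function.Embedding.subtype (· ∈ T)) ⊆ T := by
      intro i hi
      simp only [Finset.mem_map, Function.Embedding.coe_subtype] at hi
      obtain ⟨j, _, rfl⟩ := hi
      exact j.2
    have hsum : ∑ i ∈ s.map (Function.Embedding.subtype (· ∈ T)), x i
        = ∑ j ∈ s, x j.1 := Finset.sum_map s _ x
    exact ⟨Finset.mem_powerset.2 hsub, by rw [hsum]; exact hs.2⟩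
  · intro A hA
    rw [Finset.mem_filter] at hA
    have hAT : A ⊆ T := Finset.mem_powerset.1 hA.1
    rw [Finset.subtype_map, Finset.filter_true_of_mem (fun i hi => hAT hi)]
  · intro s hs
    apply Finset.map_injective (Function.Embedding.subtype (· ∈ T))
    rw [Finset.subtype_map]
    apply Finset.filter_true_of_mem
    intro i hi
    simp only [Finset.mem_map, Function.Embedding.coe_subtype] at hi
    obtain ⟨j, _, rfl⟩ := hi
    exact j.2
  · intro A hA
    rw [Finset.mem_filter] at hA
    have hAT : A ⊆ T := Finset.mem_powerset.1 hA.1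
    have hc : (A.subtype (· ∈ T)).card = A.card := by
      rw [Finset.card_subtype, Finset.filter_true_of_mem (fun i hi => hAT hi)]
    rw [hc]

lemma binom_sum_one' (p q : ℝ) (hpq : p + q = 1) (m : ℕ) :
    ∑ j ∈ range (m+1), (m.choose j : ℝ) * p^j * q^(m-j) = 1 := by
  have h := add_pow p q m
  rw [hpq, one_pow] at h
  rw [h]
  exact Finset.sum_congr rfl (fun j hj => by ring)

lemma powerset_weight_sum_one (p q : ℝ) (hpq : p + q = 1) {γ : Type} [DecidableEq γ]
    (C : Finset γ) :
    ∑ B ∈ C.powerset, p^B.card * q^(C.card - B.card) = 1 := by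
  have hfib : ∑ B ∈ C.powerset, p^B.card * q^(C.card - B.card)
      = ∑ r ∈ range (C.card+1), ∑ B ∈ C.powerset.filter (fun B => B.card = r),
          p^B.card * q^(C.card - B.card) := by
    rw [Finset.sum_fiberwise_of_maps_to]
    intro B hB
    simp only [mem_range, Nat.lt_succ_iff]
    exact Finset.card_le_card (Finset.mem_powerset.1 hB)
  rw [hfib, ← binom_sum_one' p q hpq C.card]
  apply Finset.sum_congr rfl
  intro r _
  rw [show C.powerset.filter (fun B => B.card = r) = C.powersetCard r from
    Finset.powersetCard_eq_filter.symm]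
  rw [Finset.sum_congr rfl (fun B hB => by rw [(Finset.mem_powersetCard.1 hB).2])]
  rw [Finset.sum_const, Finset.card_powersetCard, nsmul_eq_mul]
  ring

lemma combi_main {n : ℕ} (p q B δ t lam : ℝ) (hδ : 0 < δ) (hp : 0 ≤ p) (hq : 0 ≤ q)
    (hpq : p + q = 1) (hB : 0 ≤ B) (ht : 1 ≤ t)
    (T : Finset (Fin n)) (x : Fin n → ℝ) (hx : ∀ i ∈ T, δ ≤ x i)
    (hBj : ∀ r, ((T.card).choose r : ℝ) * p^r * q^(T.card - r) ≤ B) :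
    ∑ A ∈ (univ : Finset (Fin n)).powerset.filter
        (fun A => |(∑ i ∈ A, x i) - lam| ≤ t*δ),
      p^A.card * q^(n - A.card) ≤ 3*t*B := by
  classical
  set f : Finset (Fin n) → ℝ :=
    fun A => if |(∑ i ∈ A, x i) - lam| ≤ t*δ then p^A.card * q^(n - A.card) else 0 with hf
  have hstep1 : ∑ A ∈ (univ : Finset (Fin n)).powerset.filter
        (fun A => |(∑ i ∈ A, x i) - lam| ≤ t*δ),
      p^A.card * q^(n - A.card) = ∑ A ∈ (univ : Finset (Fin n)).powerset, f A := by
    rw [hf, Finset.sum_filter]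
  rw [hstep1]
  -- reindex by pairs
  have hstep2 : ∑ A ∈ (univ : Finset (Fin n)).powerset, f A
      = ∑ P ∈ Tᶜ.powerset ×ˢ T.powerset, f (P.1 ∪ P.2) := by
    apply Finset.sum_nbij' (i := fun A => (A \ T, A ∩ T)) (j := fun P => P.1 ∪ P.2)
    · intro A _
      rw [Finset.mem_product]
      constructor
      · rw [Finset.mem_powerset]
        intro i hi
        rw [Finset.mem_compl]
        exact (Finset.mem_sdiff.1 hi).2
      · rw [Finset.mem_powerset]
        exact Finset.inter_subset_right
    · intro P _
      rw [Finset.mem_powerset]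
      exact Finset.subset_univ _
    · intro A _
      exact Finset.sdiff_union_inter A T
    · intro P hP
      rw [Finset.mem_product, Finset.mem_powerset, Finset.mem_powerset] at hP
      obtain ⟨h1, h2⟩ := hP
      have e1 : (P.1 ∪ P.2) \ T = P.1 := by
        ext i
        simp only [Finset.mem_sdiff, Finset.mem_union]
        constructor
        · rintro ⟨h3 | h3, h4⟩
          · exact h3
          · exact absurd (h2 h3) h4
        · intro h3
          exact ⟨Or.inl h3, fun h4 => (Finset.mem_compl.1 (h1 h3)) h4⟩
      have e2 : (P.1 ∪ P.2) ∩ T = P.2 := by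
        ext i
        simp only [Finset.mem_inter, Finset.mem_union]
        constructor
        · rintro ⟨h3 | h3, h4⟩
          · exact absurd h4 (Finset.mem_compl.1 (h1 h3))
          · exact h3
        · intro h3
          exact ⟨Or.inr h3, h2 h3⟩
      rw [e1, e2]
    · intro A _
      rw [Finset.sdiff_union_inter A T]
  rw [hstep2, Finset.sum_product]
  -- bound inner sums
  have hinner : ∀ Bs ∈ Tᶜ.powerset,
      ∑ A' ∈ T.powerset, f (Bs ∪ A')
        ≤ p^Bs.card * q^(Tᶜ.card - Bs.card) * (3*t*B) := by
    intro Bs hBs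
    rw [Finset.mem_powerset] at hBs
    have hdisj : ∀ A' ∈ T.powerset, Disjoint Bs A' := by
      intro A' hA'
      rw [Finset.mem_powerset] at hA'
      rw [Finset.disjoint_left]
      intro i hi hi'
      exact (Finset.mem_compl.1 (hBs hi)) (hA' hi')
    have hterm : ∀ A' ∈ T.powerset, f (Bs ∪ A')
        = (p^Bs.card * q^(Tᶜ.card - Bs.card)) *
          (if |(∑ i ∈ A', x i) - (lam - ∑ i ∈ Bs, x i)| ≤ t*δ
            then p^A'.card * q^(T.card - A'.card) else 0) := by
      intro A' hA'
      have hd := hdisj A' hA'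
      rw [Finset.mem_powerset] at hA'
      have hcard : (Bs ∪ A').card = Bs.card + A'.card := Finset.card_union_of_disjoint hd
      have hsum : ∑ i ∈ Bs ∪ A', x i = ∑ i ∈ Bs, x i + ∑ i ∈ A', x i :=
        Finset.sum_union hd
      have hexp : n - (Bs.card + A'.card) = (Tᶜ.card - Bs.card) + (T.card - A'.card) := by
        have h1 : Bs.card ≤ Tᶜ.card := Finset.card_le_card hBs
        have h2 : A'.card ≤ T.card := Finset.card_le_card hA'
        have h3 : T.card + Tᶜ.card = n := by
          rw [Finset.card_add_card_compl T, Fintype.card_fin]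
        omega
      have hcong : (|(∑ i ∈ Bs ∪ A', x i) - lam| ≤ t*δ)
          = (|(∑ i ∈ A', x i) - (lam - ∑ i ∈ Bs, x i)| ≤ t*δ) := by
        rw [hsum, show (∑ i ∈ Bs, x i + ∑ i ∈ A', x i) - lam
          = (∑ i ∈ A', x i) - (lam - ∑ i ∈ Bs, x i) by ring]
      rw [hf]
      simp only [hcong, hcard, hexp, pow_add]
      split
      · ring
      · ring
    rw [Finset.sum_congr rfl hterm, ← Finset.mul_sum]
    apply mul_le_mul_of_nonneg_left _ (by positivity)
    rw [← Finset.sum_filter]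
    exact transfer_sum T p q B δ t (lam - ∑ i ∈ Bs, x i) hδ hp hq hB ht hBj x hx
  calc ∑ Bs ∈ Tᶜ.powerset, ∑ A' ∈ T.powerset, f (Bs ∪ A')
      ≤ ∑ Bs ∈ Tᶜ.powerset, p^Bs.card * q^(Tᶜ.card - Bs.card) * (3*t*B) :=
        Finset.sum_le_sum hinner
    _ = (∑ Bs ∈ Tᶜ.powerset, p^Bs.card * q^(Tᶜ.card - Bs.card)) * (3*t*B) := by
        rw [Finset.sum_mul]
    _ = 1 * (3*t*B) := by rw [powerset_weight_sum_one p q hpq]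
    _ = 3*t*B := one_mul _

lemma prob_le_combi {Ω : Type} [MeasurableSpace Ω] (P : Measure Ω) [IsProbabilityMeasure P]
    (p q : ℝ) (hp : 0 ≤ p) (hq : 0 ≤ q) (hpq : p + q = 1)
    {n : ℕ} (b : Fin n → Ω → ℝ) (hmeas : ∀ i, Measurable (b i))
    (hind : iIndepFun b P)
    (hone : ∀ i, P {ω | b i ω = 1} = ENNReal.ofReal p)
    (hzero : ∀ i, P {ω | b i ω = 0} = ENNReal.ofReal q)
    (x : Fin n → ℝ) (r lam : ℝ) :
    P {ω | |(∑ i, b i ω * x i) - lam| ≤ r}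
      ≤ ENNReal.ofReal (∑ A ∈ (univ : Finset (Fin n)).powerset.filter
          (fun A => |(∑ i ∈ A, x i) - lam| ≤ r), p^A.card * q^(n-A.card)) := by
  classical
  set Good := (univ : Finset (Fin n)).powerset.filter
      (fun A => |(∑ i ∈ A, x i) - lam| ≤ r) with hGood
  set EA : Finset (Fin n) → Set Ω :=
    fun A => ⋂ i, b i ⁻¹' ({if i ∈ A then (1:ℝ) else 0} : Set ℝ) with hEA
  set Nset : Set Ω := ⋃ i, ({ω | b i ω = 1} ∪ {ω | b i ω = 0})ᶜ with hNset
  have hm1 : ∀ i, MeasurableSet {ω | b i ω = 1} := fun i =>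
    hmeas i (measurableSet_singleton 1)
  have hm0 : ∀ i, MeasurableSet {ω | b i ω = 0} := fun i =>
    hmeas i (measurableSet_singleton 0)
  have hNnull : P Nset = 0 := by
    rw [hNset]
    apply measure_iUnion_null
    intro i
    have hdisj : Disjoint {ω | b i ω = 1} {ω | b i ω = 0} := by
      rw [Set.disjoint_left]
      intro ω hω1 hω0
      simp only [Set.mem_setOf_eq] at hω1 hω0
      rw [hω1] at hω0
      norm_num at hω0
    have hu : P ({ω | b i ω = 1} ∪ {ω | b i ω = 0}) = 1 := by
      rw [measure_union hdisj (hm0 i), hone i, hzero i,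
        ← ENNReal.ofReal_add hp hq, hpq, ENNReal.ofReal_one]
    rw [measure_compl ((hm1 i).union (hm0 i)) (by simp), hu]
    simp
  have hPA : ∀ A : Finset (Fin n), P (EA A)
      = ENNReal.ofReal (p^A.card * q^(n - A.card)) := by
    intro A
    have h1 : P (EA A) = ∏ i, P (b i ⁻¹' ({if i ∈ A then (1:ℝ) else 0} : Set ℝ)) := by
      rw [hEA]
      have := hind.measure_inter_preimage_eq_mul (S := univ)
        (sets := fun i => ({if i ∈ A then (1:ℝ) else 0} : Set ℝ))
        (fun i _ => measurableSet_singleton _)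
      simp only [Set.iInter_true, mem_univ] at this ⊢
      rw [← this]
    rw [h1]
    have h2 : ∀ i, P (b i ⁻¹' ({if i ∈ A then (1:ℝ) else 0} : Set ℝ))
        = if i ∈ A then ENNReal.ofReal p else ENNReal.ofReal q := by
      intro i
      by_cases hi : i ∈ A
      · simp only [hi, if_true]
        rw [← hone i]
        congr 1
      · simp only [hi, if_false]
        rw [← hzero i]
        congr 1
    rw [Finset.prod_congr rfl (fun i _ => h2 i)]
    rw [Finset.prod_ite (f := fun _ => ENNReal.ofReal p) (g := fun _ => ENNReal.ofReal q)]
    rw [Finset.prod_const, Finset.prod_const]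
    have hA1 : univ.filter (fun i => i ∈ A) = A := by
      ext i; simp
    have hA2 : (univ.filter (fun i => ¬ i ∈ A)).card = n - A.card := by
      rw [Finset.filter_not, Finset.card_sdiff_of_subset]
      · congr 1
        · simp
        · rw [hA1]
      · intro i hi
        rw [hA1] at hi
        exact mem_univ i
    rw [hA1, hA2]
    rw [ENNReal.ofReal_mul (by positivity), ← ENNReal.ofReal_pow hp, ← ENNReal.ofReal_pow hq]
  -- event inclusion
  have hincl : {ω | |(∑ i, b i ω * x i) - lam| ≤ r} ⊆ Nset ∪ ⋃ A ∈ Good, EA A := by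
    intro ω hω
    by_cases hN : ω ∈ Nset
    · exact Or.inl hN
    · right
      have h01 : ∀ i, b i ω = 1 ∨ b i ω = 0 := by
        intro i
        rw [hNset] at hN
        simp only [Set.mem_iUnion, Set.mem_compl_iff, Set.mem_union, Set.mem_setOf_eq,
          not_exists, not_not] at hN
        have := hN i
        tauto
      set A := univ.filter (fun i => b i ω = 1) with hA
      have hsum : ∑ i, b i ω * x i = ∑ i ∈ A, x i := by
        rw [hA, Finset.sum_filter]
        apply Finset.sum_congr rfl
        intro i _
        rcases h01 i with h | h
        · rw [h]; simp
        · rw [h]; norm_num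
      have hAGood : A ∈ Good := by
        rw [hGood, Finset.mem_filter]
        refine ⟨Finset.mem_powerset.2 (Finset.subset_univ _), ?_⟩
        rw [← hsum]
        exact hω
      apply Set.mem_biUnion hAGood
      rw [hEA]
      rw [Set.mem_iInter]
      intro i
      simp only [Set.mem_preimage, Set.mem_singleton_iff]
      by_cases hi : i ∈ A
      · rw [if_pos hi]
        exact (Finset.mem_filter.1 hi).2
      · rw [if_neg hi]
        rcases h01 i with h | h
        · exact absurd (Finset.mem_filter.2 ⟨mem_univ i, h⟩) hi
        · exact h
  calc P {ω | |(∑ i, b i ω * x i) - lam| ≤ r}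
      ≤ P (Nset ∪ ⋃ A ∈ Good, EA A) := measure_mono hincl
    _ ≤ P Nset + P (⋃ A ∈ Good, EA A) := measure_union_le _ _
    _ = P (⋃ A ∈ Good, EA A) := by rw [hNnull, zero_add]
    _ ≤ ∑ A ∈ Good, P (EA A) := measure_biUnion_finset_le Good EA
    _ = ∑ A ∈ Good, ENNReal.ofReal (p^A.card * q^(n - A.card)) := by
        exact Finset.sum_congr rfl (fun A _ => hPA A)
    _ = ENNReal.ofReal (∑ A ∈ Good, p^A.card * q^(n - A.card)) := by
        rw [ENNReal.ofReal_sum_of_nonneg (fun A _ => by positivity)]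

end Auxiliary

open Finset in
/-- Lévy–Kolmogorov–Rogozin consequence: if at least `k` coordinates of `x`
have absolute value at least `ν/√n`, then the Lévy concentration function of
the Bernoulli sum at radius `νt/√n` is at most `Ct/√k`, with `C` depending only
on `p`. -/
theorem stmt_13 (p : ℝ) (hp : p ∈ Set.Ioc (0:ℝ) (1/2)) :
    ∃ C : ℝ, 0 < C ∧
      ∀ {Ω : Type} [MeasurableSpace Ω] (P : Measure Ω), IsProbabilityMeasure P →
      ∀ (n : ℕ) (b : Fin n → Ω → ℝ), (∀ i, Measurable (b i)) →
        iIndepFun b P →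
        (∀ i, P {ω | b i ω = 1} = ENNReal.ofReal p) →
        (∀ i, P {ω | b i ω = 0} = ENNReal.ofReal (1 - p)) →
      ∀ (x : Fin n → ℝ) (ν : ℝ), 0 < ν →
      ∀ k : ℕ, 1 ≤ k →
        (k : ℝ) ≤ ((Finset.univ.filter fun i => ν / Real.sqrt n ≤ |x i|).card : ℝ) →
      ∀ t : ℝ, 1 ≤ t → ∀ lam : ℝ,
        P {ω | |(∑ i, b i ω * x i) - lam| ≤ ν * t / Real.sqrt n}
          ≤ ENNReal.ofReal (C * t / Real.sqrt k) := by
  classical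
  obtain ⟨hp0, hp2⟩ := hp
  set q : ℝ := 1 - p with hq_def
  have hq0 : 0 < q := by rw [hq_def]; linarith
  have hpq : p + q = 1 := by rw [hq_def]; ring
  have hpq0 : 0 < p * q := mul_pos hp0 hq0
  refine ⟨100 / Real.sqrt (p*q), by positivity, ?_⟩
  intro Ω _ P hprob n b hmeas hind hone hzero x ν hν k hk1 hkcard t ht lam
  haveI := hprob
  -- basic facts
  have hkR : (1:ℝ) ≤ k := by exact_mod_cast hk1
  set K := Finset.univ.filter (fun i : Fin n => ν / Real.sqrt n ≤ |x i|) with hK_def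
  have hn0 : 0 < n := by
    rcases Nat.eq_zero_or_pos n with h | h
    · exfalso
      have : K.card ≤ 0 := by
        subst h
        exact le_trans (Finset.card_le_univ K) (by simp)
      have hcast : (K.card : ℝ) ≤ 0 := by exact_mod_cast this
      linarith
    · exact h
  have hnR : (0:ℝ) < n := by exact_mod_cast hn0
  set δ : ℝ := ν / Real.sqrt n with hδ_def
  have hδ0 : 0 < δ := by
    rw [hδ_def]
    positivity
  have hr : ν * t / Real.sqrt n = t * δ := by rw [hδ_def]; ring
  -- sign split
  set Kp := K.filter (fun i => 0 ≤ x i) with hKp_def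
  set Km := K.filter (fun i => ¬ 0 ≤ x i) with hKm_def
  have hsplit : Kp.card + Km.card = K.card := Finset.card_filter_add_card_filter_not _
  -- choose T
  obtain ⟨T, hTcard, hTsign⟩ :
      ∃ T : Finset (Fin n), ((k:ℝ) ≤ 2 * T.card ∧ 1 ≤ T.card) ∧
        ((∀ i ∈ T, δ ≤ x i) ∨ (∀ i ∈ T, δ ≤ -x i)) := by
    rcases le_total Km.card Kp.card with hcase | hcase
    · refine ⟨Kp, ⟨?_, ?_⟩, Or.inl ?_⟩
      · have h1 : K.card ≤ 2 * Kp.card := by omega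
        have h2 : (K.card : ℝ) ≤ 2 * Kp.card := by exact_mod_cast h1
        linarith [hkcard]
      · have h0 : (0:ℝ) < (K.card : ℝ) := lt_of_lt_of_le (by linarith) hkcard
        have h1 : 0 < K.card := by exact_mod_cast h0
        omega
      · intro i hi
        rw [hKp_def, Finset.mem_filter] at hi
        obtain ⟨hiK, hipos⟩ := hi
        rw [hK_def, Finset.mem_filter] at hiK
        have := hiK.2
        rwa [abs_of_nonneg hipos] at this
    · refine ⟨Km, ⟨?_, ?_⟩, Or.inr ?_⟩
      · have h1 : K.card ≤ 2 * Km.card := by omega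
        have h2 : (K.card : ℝ) ≤ 2 * Km.card := by exact_mod_cast h1
        linarith [hkcard]
      · have h0 : (0:ℝ) < (K.card : ℝ) := lt_of_lt_of_le (by linarith) hkcard
        have h1 : 0 < K.card := by exact_mod_cast h0
        omega
      · intro i hi
        rw [hKm_def, Finset.mem_filter] at hi
        obtain ⟨hiK, hineg⟩ := hi
        push_neg at hineg
        rw [hK_def, Finset.mem_filter] at hiK
        have := hiK.2
        rwa [abs_of_neg hineg] at this
  obtain ⟨hk2m, hm1⟩ := hTcard
  set m := T.card with hm_def
  set B : ℝ := 16 / Real.sqrt (p*q*m) with hB_def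
  have hmR : (1:ℝ) ≤ m := by exact_mod_cast hm1
  have hB0 : 0 ≤ B := by rw [hB_def]; positivity
  have hBj : ∀ r, ((m.choose r : ℝ)) * p^r * q^(m - r) ≤ B :=
    fun r => binom_max p q hp0 hq0 hpq m hm1 r
  -- the combinatorial bound
  have hcombi : ∑ A ∈ (univ : Finset (Fin n)).powerset.filter
        (fun A => |(∑ i ∈ A, x i) - lam| ≤ t*δ),
      p^A.card * q^(n - A.card) ≤ 3*t*B := by
    rcases hTsign with hpos | hneg
    · exact combi_main p q B δ t lam hδ0 hp0.le hq0.le hpq hB0 ht T x hpos hBj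
    · have heq : (univ : Finset (Fin n)).powerset.filter
          (fun A => |(∑ i ∈ A, x i) - lam| ≤ t*δ)
          = (univ : Finset (Fin n)).powerset.filter
          (fun A => |(∑ i ∈ A, (fun j => -x j) i) - (-lam)| ≤ t*δ) := by
        apply Finset.filter_congr
        intro A _
        have h1 : ∑ i ∈ A, (fun j => -x j) i = -(∑ i ∈ A, x i) := by
          simp
        rw [h1, show -(∑ i ∈ A, x i) - (-lam) = -((∑ i ∈ A, x i) - lam) by ring, abs_neg]
      rw [heq]
      exact combi_main p q B δ t (-lam) hδ0 hp0.le hq0.le hpq hB0 ht T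
        (fun j => -x j) hneg hBj
  -- the final numeric bound
  have hnumeric : 3*t*B ≤ 100 / Real.sqrt (p*q) * t / Real.sqrt k := by
    have hsk : 0 < Real.sqrt k := Real.sqrt_pos.2 (by linarith)
    have hsm : 0 < Real.sqrt m := Real.sqrt_pos.2 (by linarith)
    have hspq : 0 < Real.sqrt (p*q) := Real.sqrt_pos.2 hpq0
    have hsplit' : Real.sqrt (p*q*m) = Real.sqrt (p*q) * Real.sqrt m :=
      Real.sqrt_mul hpq0.le m
    have h2 : Real.sqrt 2 ≤ 1.5 := by
      rw [show (1.5:ℝ) = Real.sqrt (1.5^2) by rw [Real.sqrt_sq]; norm_num]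
      apply Real.sqrt_le_sqrt
      norm_num
    have hk2m' : Real.sqrt k ≤ Real.sqrt 2 * Real.sqrt m := by
      rw [← Real.sqrt_mul (by norm_num) (m:ℝ)]
      apply Real.sqrt_le_sqrt
      linarith
    have h48 : 48 * Real.sqrt k ≤ 100 * Real.sqrt m := by
      nlinarith [Real.sqrt_nonneg (m:ℝ), Real.sqrt_nonneg (k:ℝ), Real.sqrt_nonneg (2:ℝ)]
    have ht0 : (0:ℝ) < t := by linarith
    have hLHS : 3*t*B = (48*t) / (Real.sqrt (p*q) * Real.sqrt m) := by
      rw [hB_def, hsplit']; ring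
    have hRHS : 100 / Real.sqrt (p*q) * t / Real.sqrt k
        = (100*t) / (Real.sqrt (p*q) * Real.sqrt k) := by ring
    rw [hLHS, hRHS, div_le_div_iff₀ (by positivity) (by positivity)]
    calc 48*t * (Real.sqrt (p*q) * Real.sqrt k)
        = (t * Real.sqrt (p*q)) * (48 * Real.sqrt k) := by ring
      _ ≤ (t * Real.sqrt (p*q)) * (100 * Real.sqrt m) :=
          mul_le_mul_of_nonneg_left h48 (by positivity)
      _ = 100*t * (Real.sqrt (p*q) * Real.sqrt m) := by ring
  -- put it together
  calc P {ω | |(∑ i, b i ω * x i) - lam| ≤ ν * t / Real.sqrt n}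
      ≤ ENNReal.ofReal (∑ A ∈ (univ : Finset (Fin n)).powerset.filter
          (fun A => |(∑ i ∈ A, x i) - lam| ≤ ν * t / Real.sqrt n),
          p^A.card * q^(n-A.card)) :=
        prob_le_combi P p q hp0.le hq0.le hpq b hmeas hind hone hzero x _ lam
    _ ≤ ENNReal.ofReal (100 / Real.sqrt (p*q) * t / Real.sqrt k) := by
        apply ENNReal.ofReal_le_ofReal
        rw [hr]
        exact le_trans hcombi hnumeric
end

section
/- Let n ≥ 2 and define f : ℤ → ℝ by f(t) = (1/m₀)·2^{-|t|/√n}, where m₀ = ∑_{t ∈ ℤ} 2^{-|t|/√n}. Then f is positive, ‖f‖₁ = 1, log₂ f is (1/√n)-Lipschitz, and there is a universal constant c > 0 such that f(t) ≥ (c/√n)·1_{[-√n - 1, √n + 1]}(t) for all t ∈ ℤ. -/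
set_option maxHeartbeats 1000000


/-- The normalized discrete exponential profile `f(t) = 2^{-|t|/√n}/m₀` is a
probability density on ℤ with `(1/√n)`-Lipschitz base-2 logarithm, and it
dominates `c/√n` on the interval `[-√n - 1, √n + 1]` for a universal `c > 0`. -/
theorem stmt_19 :
    ∃ c : ℝ, 0 < c ∧ ∀ n : ℕ, 2 ≤ n →
      ∀ m₀ : ℝ, m₀ = (∑' t : ℤ, (2:ℝ) ^ (-(|t| : ℝ) / Real.sqrt n)) →
      ∀ f : ℤ → ℝ, (∀ t : ℤ, f t = (1 / m₀) * (2:ℝ) ^ (-(|t| : ℝ) / Real.sqrt n)) →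
        (∀ t, 0 < f t) ∧
        (Summable fun t : ℤ => f t) ∧ (∑' t : ℤ, f t) = 1 ∧
        (∀ t : ℤ, |Real.logb 2 (f (t + 1)) - Real.logb 2 (f t)| ≤ 1 / Real.sqrt n) ∧
        (∀ t : ℤ, |(t : ℝ)| ≤ Real.sqrt n + 1 → c / Real.sqrt n ≤ f t) := by
  refine ⟨1/24, by norm_num, fun n hn m₀ hm₀ f hf => ?_⟩
  set s := Real.sqrt n with hs_def
  have hs1 : 1 ≤ s := by
    rw [hs_def, show (1:ℝ) = Real.sqrt 1 by simp]
    exact Real.sqrt_le_sqrt (by exact_mod_cast Nat.one_le_of_lt hn)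
  have hs0 : 0 < s := lt_of_lt_of_le one_pos hs1
  set r : ℝ := (2:ℝ) ^ (-(1:ℝ)/s) with hr_def
  have hr0 : 0 < r := Real.rpow_pos_of_pos two_pos _
  have hr1 : r < 1 := by
    apply Real.rpow_lt_one_of_one_lt_of_neg one_lt_two
    exact div_neg_of_neg_of_pos (by norm_num) hs0
  -- key rewriting
  have key : ∀ t : ℤ, (2:ℝ) ^ (-(|t| : ℝ) / s) = r ^ t.natAbs := by
    intro t
    rw [hr_def, ← Real.rpow_natCast ((2:ℝ) ^ (-(1:ℝ)/s)) t.natAbs,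
      ← Real.rpow_mul (by norm_num)]
    congr 1
    rw [Nat.cast_natAbs, Int.cast_abs]
    ring
  have hsum_nat : Summable (fun k : ℕ => r ^ k) :=
    summable_geometric_of_lt_one hr0.le hr1
  have hsum_nat' : Summable (fun k : ℕ => r ^ ((k : ℤ).natAbs)) := by
    simpa using hsum_nat
  have hsum_neg : Summable (fun k : ℕ => r ^ ((-(k : ℤ)).natAbs)) := by
    simpa using hsum_nat
  have hgsum : Summable (fun t : ℤ => (2:ℝ) ^ (-(|t| : ℝ) / s)) := by
    have : Summable (fun t : ℤ => r ^ t.natAbs) :=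
      Summable.of_nat_of_neg (f := fun t : ℤ => r ^ t.natAbs) hsum_nat' hsum_neg
    exact this.congr fun t => (key t).symm
  -- value of m₀
  have hS : (∑' k : ℕ, r ^ k) = (1 - r)⁻¹ := tsum_geometric_of_lt_one hr0.le hr1
  have hm₀val : m₀ = 2 * (1 - r)⁻¹ - 1 := by
    have e2 := Summable.tsum_of_nat_of_neg (f := fun t : ℤ => r ^ t.natAbs) hsum_nat' hsum_neg
    simp only [Int.natAbs_natCast, Int.natAbs_neg, Int.natAbs_zero, pow_zero] at e2
    rw [hm₀, tsum_congr key, e2, hS]; ring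
  have h1r : 0 < 1 - r := by linarith
  have hm₀1 : 1 ≤ m₀ := by
    rw [hm₀val]
    have : 1 ≤ (1 - r)⁻¹ := by
      rw [le_inv_comm₀ one_pos h1r]; linarith
    linarith
  have hm₀0 : 0 < m₀ := lt_of_lt_of_le one_pos hm₀1
  -- upper bound on m₀
  have hy : Real.log 2 / s ≤ 1 := by
    have h2 : Real.log 2 < 1 := by
      have := Real.log_two_lt_d9; linarith
    calc Real.log 2 / s ≤ Real.log 2 / 1 := by
          apply div_le_div_of_nonneg_left (Real.log_nonneg one_le_two) one_pos hs1
      _ ≤ 1 := by linarith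
  have hy0 : 0 < Real.log 2 / s := div_pos (Real.log_pos one_lt_two) hs0
  have hr_exp : r = Real.exp (-(Real.log 2 / s)) := by
    rw [hr_def, Real.rpow_def_of_pos two_pos]
    congr 1; ring
  have h1r_ge : Real.log 2 / s / 2 ≤ 1 - r := by
    set y := Real.log 2 / s
    have h1 : 1 + y ≤ Real.exp y := by linarith [Real.add_one_le_exp y]
    have h2 : Real.exp (-y) ≤ (1 + y)⁻¹ := by
      rw [Real.exp_neg]
      exact inv_anti₀ (by linarith) h1
    have h3 : (1 + y)⁻¹ ≤ 1 - y/2 := by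
      rw [inv_le_iff_one_le_mul₀ (by linarith)]
      nlinarith
    rw [hr_exp]
    calc y/2 = 1 - (1 - y/2) := by ring
      _ ≤ 1 - Real.exp (-y) := by linarith
  have hm₀le : m₀ ≤ 6 * s := by
    have hlog : (0.6931471803 : ℝ) < Real.log 2 := Real.log_two_gt_d9
    have h1 : (1 - r)⁻¹ ≤ (Real.log 2 / s / 2)⁻¹ :=
      inv_anti₀ (by positivity) h1r_ge
    have h2 : (Real.log 2 / s / 2)⁻¹ = 2 * s / Real.log 2 := by
      field_simp
    have h3 : 2 * s / Real.log 2 ≤ 3 * s := by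
      rw [div_le_iff₀ (Real.log_pos one_lt_two)]
      nlinarith
    rw [hm₀val]
    nlinarith
  -- positivity of f
  have hfpos : ∀ t, 0 < f t := by
    intro t
    rw [hf t]
    have := Real.rpow_pos_of_pos (two_pos (α := ℝ)) (-(|t| : ℝ) / s)
    positivity
  refine ⟨hfpos, ?_, ?_, ?_, ?_⟩
  · exact (hgsum.mul_left (1/m₀)).congr fun t => (hf t).symm
  · rw [tsum_congr hf, tsum_mul_left, ← hm₀]
    field_simp
  · intro t
    have hlogb : ∀ u : ℤ, Real.logb 2 (f u) = Real.logb 2 (1/m₀) + (-(|u| : ℝ) / s) := by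
      intro u
      rw [hf u, Real.logb_mul (by positivity) (by positivity),
        Real.logb_rpow two_pos (by norm_num)]
    rw [hlogb, hlogb]
    have habs : |(|(t:ℝ)+1| - |(t:ℝ)|)| ≤ 1 := by
      have := abs_abs_sub_abs_le_abs_sub ((t:ℝ)+1) (t:ℝ)
      simpa using this
    have heq : Real.logb 2 (1/m₀) + -|(((t+1 : ℤ)):ℝ)| / s -
        (Real.logb 2 (1/m₀) + -(|(t:ℝ)|) / s)
        = -((|(t:ℝ)+1|) - (|(t:ℝ)|)) / s := by push_cast; ring
    rw [heq, abs_div, abs_neg, abs_of_pos hs0]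
    gcongr
  · intro t ht
    rw [hf t]
    have h1 : (-2 : ℝ) ≤ -(|t| : ℝ) / s := by
      rw [neg_div, neg_le_neg_iff, div_le_iff₀ hs0]
      nlinarith
    have h2 : (1/4 : ℝ) ≤ (2:ℝ) ^ (-(|t| : ℝ) / s) := by
      calc (1/4 : ℝ) = (2:ℝ) ^ (-2 : ℝ) := by
            rw [show (-2:ℝ) = ((-2 : ℤ) : ℝ) by norm_num, Real.rpow_intCast]
            norm_num
        _ ≤ _ := Real.rpow_le_rpow_of_exponent_le one_le_two h1
    have h3 : (1:ℝ)/24 / s ≤ 1/m₀ * (1/4) := by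
      have hinv : 1/(6*s) ≤ 1/m₀ := one_div_le_one_div_of_le hm₀0 hm₀le
      calc (1:ℝ)/24 / s = 1/(6*s) * (1/4) := by field_simp; ring
        _ ≤ 1/m₀ * (1/4) := by linarith
    calc (1:ℝ)/24 / s ≤ 1/m₀ * (1/4) := h3
      _ ≤ 1/m₀ * (2:ℝ) ^ (-(|t| : ℝ) / s) := by
          apply mul_le_mul_of_nonneg_left h2 (by positivity)
end
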